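/- arXiv:2103.04187 — 4 statements merged into one kernel-verified Lean document; each statement's English description precedes it below -/
import Mathlib

section
/- Commutators of the infinitesimal generators of shift and constant tilt behave like those of shift and tilt on polynomials: as operators on ℝ[[z_k,z_𝐧]] one has (a) [D^(𝐧), D^(𝐧′)] = 0 for all 𝐧, 𝐧′ ∈ ℕ² (including the cases involving D^(0)); (b) [∂₁, ∂₂] = 0; (c) [D^(𝐧), ∂₁] = n₁·D^(𝐧−(1,0)) for all 𝐧 ∈ ℕ², with the understanding that the right-hand side is 0 when n₁ = 0, and symmetrically [D^(𝐧), ∂₂] = n₂·D^(𝐧−(0,1)). -/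
open MvPolynomial

abbrev N2 : Type := {p : ℕ × ℕ // p ≠ (0, 0)}
abbrev Idx : Type := ℕ ⊕ N2
abbrev MIdx : Type := Idx →₀ ℕ
abbrev PS : Type := MvPowerSeries Idx ℝ

noncomputable section

/-- the weight `|𝐧| = w₁ n₁ + w₂ n₂` of `𝐧 ∈ ℕ²`. -/
def wt (w₁ w₂ : ℝ) (n : ℕ × ℕ) : ℝ := w₁ * n.1 + w₂ * n.2

/-- `[γ] = Σ_k k γ(k) − Σ_{𝐧≠0} γ(𝐧)`. -/
def brk (γ : MIdx) : ℤ :=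
  γ.sum fun i n =>
    match i with
    | Sum.inl k => (k : ℤ) * n
    | Sum.inr _ => -(n : ℤ)

/-- `Σ_{𝐦≠0} |𝐦| γ(𝐦)`. -/
def wsum (w₁ w₂ : ℝ) (γ : MIdx) : ℝ :=
  γ.sum fun i n =>
    match i with
    | Sum.inl _ => 0
    | Sum.inr m => wt w₁ w₂ m.1 * n

/-- the homogeneity `|γ| = α([γ]+1) + Σ_{𝐧≠0}|𝐧|γ(𝐧)`. -/
def homdeg (α w₁ w₂ : ℝ) (γ : MIdx) : ℝ := α * ((brk γ : ℝ) + 1) + wsum w₁ w₂ γ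

/-! ### operators on monomials (polynomial level) -/

/-- `D^(0) z^γ = Σ_k (k+1) γ(k) z^{γ - e_k + e_{k+1}}`. -/
def D0mono (γ : MIdx) : MvPolynomial Idx ℝ :=
  γ.sum fun i n =>
    match i with
    | Sum.inl k =>
        (((k + 1) * n : ℕ) : ℝ) •
          monomial (γ - Finsupp.single (Sum.inl k) 1 + Finsupp.single (Sum.inl (k + 1)) 1) 1
    | Sum.inr _ => 0

/-- `D^(𝐧) z^γ = ∂_{z_𝐧} z^γ` for `𝐧 ≠ 0`. -/
def DNmono (m : N2) (γ : MIdx) : MvPolynomial Idx ℝ :=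
  ((γ (Sum.inr m) : ℕ) : ℝ) • monomial (γ - Finsupp.single (Sum.inr m) 1) 1

/-- `D^(𝐧) z^γ` for arbitrary `𝐧 ∈ ℕ²`. -/
def Dmono (n : ℕ × ℕ) (γ : MIdx) : MvPolynomial Idx ℝ :=
  if h : n = (0, 0) then D0mono γ else DNmono ⟨n, h⟩ γ

lemma add10_ne (n : ℕ × ℕ) : n + (1, 0) ≠ (0, 0) := by
  intro h
  exact Nat.succ_ne_zero n.1 (congrArg Prod.fst h)

lemma add01_ne (n : ℕ × ℕ) : n + (0, 1) ≠ (0, 0) := by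
  intro h
  exact Nat.succ_ne_zero n.2 (congrArg Prod.snd h)

def v10 : N2 := ⟨(1, 0), by decide⟩
def v01 : N2 := ⟨(0, 1), by decide⟩

/-- `∂₁ z^γ = z_{(1,0)} D^(0) z^γ + Σ_{𝐧≠0} (n₁+1) z_{𝐧+(1,0)} ∂_{z_𝐧} z^γ`. -/
def d1mono (γ : MIdx) : MvPolynomial Idx ℝ :=
  X (Sum.inr v10) * D0mono γ +
    γ.sum fun i n =>
      match i with
      | Sum.inl _ => 0
      | Sum.inr m =>
          (((m.1.1 + 1) * n : ℕ) : ℝ) •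
            monomial
              (γ - Finsupp.single (Sum.inr m) 1 +
                Finsupp.single (Sum.inr ⟨m.1 + (1, 0), add10_ne m.1⟩) 1) 1

/-- `∂₂ z^γ`. -/
def d2mono (γ : MIdx) : MvPolynomial Idx ℝ :=
  X (Sum.inr v01) * D0mono γ +
    γ.sum fun i n =>
      match i with
      | Sum.inl _ => 0
      | Sum.inr m =>
          (((m.1.2 + 1) * n : ℕ) : ℝ) •
            monomial
              (γ - Finsupp.single (Sum.inr m) 1 +
                Finsupp.single (Sum.inr ⟨m.1 + (0, 1), add01_ne m.1⟩) 1) 1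

/-! ### operators on power series (coefficientwise) -/

/-- coefficient of `D^(0) f` at `β`. -/
def D0coeff (f : PS) (β : MIdx) : ℝ :=
  ∑ i ∈ β.support,
    match i with
    | Sum.inl (k + 1) =>
        (((k + 1) * (β (Sum.inl k) + 1) : ℕ) : ℝ) *
          MvPowerSeries.coeff (R := ℝ)
            (β + Finsupp.single (Sum.inl k) 1 - Finsupp.single (Sum.inl (k + 1)) 1) f
    | _ => 0

/-- `D^(0)` on power series. -/
def D0series (f : PS) : PS := D0coeff f

/-- `D^(𝐧) = ∂_{z_𝐧}` on power series, `𝐧 ≠ 0`. -/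
def DNseries (m : N2) (f : PS) : PS :=
  fun β => ((β (Sum.inr m) + 1 : ℕ) : ℝ) *
    MvPowerSeries.coeff (R := ℝ) (β + Finsupp.single (Sum.inr m) 1) f

/-- `D^(𝐧)` on power series for arbitrary `𝐧 ∈ ℕ²`. -/
def Dseries (n : ℕ × ℕ) (f : PS) : PS :=
  if h : n = (0, 0) then D0series f else DNseries ⟨n, h⟩ f

/-- coefficient of `∂₁ f` at `β`. -/
def d1coeff (f : PS) (β : MIdx) : ℝ :=
  (if 1 ≤ β (Sum.inr v10) then D0coeff f (β - Finsupp.single (Sum.inr v10) 1) else 0) +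
    ∑ i ∈ β.support,
      match i with
      | Sum.inl _ => 0
      | Sum.inr p =>
          if hp : ((p.1.1 - 1, p.1.2) : ℕ × ℕ) ≠ (0, 0) ∧ 1 ≤ p.1.1 then
            (p.1.1 : ℝ) *
              ((((β - Finsupp.single (Sum.inr p) 1 : MIdx) (Sum.inr ⟨(p.1.1 - 1, p.1.2), hp.1⟩) : ℕ) + 1 : ℕ) : ℝ) *
              MvPowerSeries.coeff (R := ℝ)
                (β - Finsupp.single (Sum.inr p) 1 +
                  Finsupp.single (Sum.inr ⟨(p.1.1 - 1, p.1.2), hp.1⟩) 1) f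
          else 0

/-- `∂₁` on power series. -/
def d1series (f : PS) : PS := d1coeff f

/-- coefficient of `∂₂ f` at `β`. -/
def d2coeff (f : PS) (β : MIdx) : ℝ :=
  (if 1 ≤ β (Sum.inr v01) then D0coeff f (β - Finsupp.single (Sum.inr v01) 1) else 0) +
    ∑ i ∈ β.support,
      match i with
      | Sum.inl _ => 0
      | Sum.inr p =>
          if hp : ((p.1.1, p.1.2 - 1) : ℕ × ℕ) ≠ (0, 0) ∧ 1 ≤ p.1.2 then
            (p.1.2 : ℝ) *
              ((((β - Finsupp.single (Sum.inr p) 1 : MIdx) (Sum.inr ⟨(p.1.1, p.1.2 - 1), hp.1⟩) : ℕ) + 1 : ℕ) : ℝ) *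
              MvPowerSeries.coeff (R := ℝ)
                (β - Finsupp.single (Sum.inr p) 1 +
                  Finsupp.single (Sum.inr ⟨(p.1.1, p.1.2 - 1), hp.1⟩) 1) f
          else 0

/-- `∂₂` on power series. -/
def d2series (f : PS) : PS := d2coeff f

/-- the operator `z^γ·D^(𝐧)` on power series. -/
def opOf (γ : MIdx) (n : ℕ × ℕ) (f : PS) : PS :=
  MvPowerSeries.monomial (R := ℝ) γ 1 * Dseries n f

/-- the dual model space `T̃*`. -/
def Ttilde : Set PS := {f | ∀ γ : MIdx, MvPowerSeries.coeff (R := ℝ) γ f ≠ 0 → 0 ≤ brk γ}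

/-- the dual model space `T*`. -/
def Tstar : Set PS :=
  {f | ∀ γ : MIdx, MvPowerSeries.coeff (R := ℝ) γ f ≠ 0 →
      0 ≤ brk γ ∨ ∃ m : N2, γ = Finsupp.single (Sum.inr m) 1}

/-! ### topology and the realization property -/

instance : TopologicalSpace PS := inferInstanceAs (TopologicalSpace ((Idx →₀ ℕ) → ℝ))

/-- `Γ` realizes the family `(π^(𝐧))_{𝐧∈ℕ²}`. -/
def Realizes (Γ : PS →ₐ[ℝ] PS) (π : ℕ × ℕ → PS) : Prop :=
  Continuous Γ ∧
    (∀ m : N2, Γ (MvPowerSeries.X (Sum.inr m)) = MvPowerSeries.X (Sum.inr m) + π m.1) ∧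
    (∀ k : ℕ, HasSum
      (fun l : ℕ => ((k + l).choose k : ℝ) • (π (0, 0) ^ l * MvPowerSeries.X (Sum.inl (k + l))))
      (Γ (MvPowerSeries.X (Sum.inl k))))

end

namespace Stmt2Aux
open Finsupp

noncomputable def elem (μ : MIdx) (a : Idx) (f : PS) : PS :=
  fun β => if μ ≤ β then (((β - μ) a + 1 : ℕ) : ℝ) * f (β - μ + Finsupp.single a 1) else 0

noncomputable def elem2 (μ : MIdx) (a b : Idx) (f : PS) : PS :=
  fun β => if μ ≤ β then
    ((((β - μ) a + 1) * ((β - μ + Finsupp.single a 1 : MIdx) b + 1) : ℕ) : ℝ) *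
      f (β - μ + Finsupp.single a 1 + Finsupp.single b 1)
  else 0

lemma elem2_symm (μ : MIdx) (a b : Idx) (f : PS) : elem2 μ a b f = elem2 μ b a f := by
  funext β
  simp only [elem2]
  by_cases h : μ ≤ β
  · rw [if_pos h, if_pos h]
    rcases eq_or_ne a b with rfl | hab
    · rfl
    · have h1 : ((β - μ + Finsupp.single a 1 : MIdx)) b = (β - μ) b := by
        simp [Finsupp.add_apply, Finsupp.single_apply, hab]
      have h2 : ((β - μ + Finsupp.single b 1 : MIdx)) a = (β - μ) a := by
        simp [Finsupp.add_apply, Finsupp.single_apply, hab.symm]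
      rw [h1, h2, add_right_comm]
      ring_nf
  · rw [if_neg h, if_neg h]

lemma elem_comp (μ ν : MIdx) (a b : Idx) (f : PS) (β : MIdx) :
    elem μ a (elem ν b f) β
      = ((ν a : ℕ) : ℝ) * elem (μ + ν - Finsupp.single a 1) b f β
        + elem2 (μ + ν) a b f β := by
  simp only [elem, elem2]
  by_cases hR1 : μ + ν - Finsupp.single a 1 ≤ β
  · have hR1' : ∀ x, μ x + ν x ≤ β x + (Finsupp.single a 1 : MIdx) x := by
      intro x
      have h := Finsupp.le_def.mp hR1 x
      simp only [Finsupp.tsub_apply, Finsupp.add_apply] at h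
      omega
    by_cases hR : μ + ν ≤ β
    · have hRx : ∀ x, μ x + ν x ≤ β x := by
        intro x
        have h := Finsupp.le_def.mp hR x
        simpa [Finsupp.add_apply] using h
      have hμ : μ ≤ β := Finsupp.le_def.mpr fun x => le_trans (Nat.le_add_right _ _) (hRx x)
      have hμx : ∀ x, μ x ≤ β x := Finsupp.le_def.mp hμ
      have hν' : ν ≤ β - μ + Finsupp.single a 1 := by
        refine Finsupp.le_def.mpr fun x => ?_
        have h1 := hRx x
        have h2 := hμx x
        simp only [Finsupp.tsub_apply, Finsupp.add_apply]
        omega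
      rw [if_pos hμ, if_pos hν', if_pos hR1, if_pos hR]
      have harg : β - μ + Finsupp.single a 1 - ν + Finsupp.single b 1
          = β - (μ + ν) + Finsupp.single a 1 + Finsupp.single b 1 := by
        ext x
        have h1 := hμx x; have h2 := hRx x
        by_cases hax : a = x <;> by_cases hbx : b = x <;>
          simp [Finsupp.tsub_apply, Finsupp.add_apply, Finsupp.single_apply, hax, hbx] <;>
          omega
      rw [harg]
      have e2 : ((β - μ + Finsupp.single a 1 - ν : MIdx)) b
          = ((β - (μ + ν) + Finsupp.single a 1 : MIdx)) b := by
        have h1 := hμx b; have h2 := hRx b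
        by_cases hab : a = b <;>
          simp [Finsupp.tsub_apply, Finsupp.add_apply, Finsupp.single_apply, hab] <;>
          omega
      rw [e2]
      by_cases hνa : ν a = 0
      · have e1 : (β - μ) a = (β - (μ + ν)) a := by
          have h1 := hμx a; have h2 := hRx a
          simp only [Finsupp.tsub_apply, Finsupp.add_apply]
          omega
        rw [e1, hνa]
        push_cast
        ring
      · have hνa1 : 1 ≤ ν a := Nat.one_le_iff_ne_zero.mpr hνa
        have harg2 : β - (μ + ν - Finsupp.single a 1) + Finsupp.single b 1
            = β - (μ + ν) + Finsupp.single a 1 + Finsupp.single b 1 := by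
          ext x
          have h1 := hμx x; have h2 := hRx x; have h4 := hμx a; have h5 := hRx a
          rcases eq_or_ne a x with rfl | hax
          · rcases eq_or_ne b a with rfl | hb
            · simp [Finsupp.tsub_apply, Finsupp.add_apply, Finsupp.single_apply] <;> omega
            · simp [Finsupp.tsub_apply, Finsupp.add_apply, Finsupp.single_apply, hb] <;> omega
          · rcases eq_or_ne b x with rfl | hb
            · simp [Finsupp.tsub_apply, Finsupp.add_apply, Finsupp.single_apply, hax] <;> omega
            · simp [Finsupp.tsub_apply, Finsupp.add_apply, Finsupp.single_apply, hax, hb] <;> omega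
        rw [harg2]
        have e3 : ((β - (μ + ν - Finsupp.single a 1) : MIdx)) b
            = ((β - (μ + ν) + Finsupp.single a 1 : MIdx)) b := by
          have h1 := hμx b; have h2 := hRx b; have h4 := hμx a; have h5 := hRx a
          rcases eq_or_ne a b with rfl | hab
          · simp [Finsupp.tsub_apply, Finsupp.add_apply, Finsupp.single_apply] <;> omega
          · simp [Finsupp.tsub_apply, Finsupp.add_apply, Finsupp.single_apply, hab] <;> omega
        rw [e3]
        have e4 : (β - μ) a = ν a + ((β - (μ + ν)) a) := by
          have h1 := hμx a; have h2 := hRx a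
          simp only [Finsupp.tsub_apply, Finsupp.add_apply]
          omega
        rw [e4]
        push_cast
        ring
    · -- R1 holds, R fails
      have hex : ∃ x, β x < μ x + ν x := by
        by_contra hc
        push_neg at hc
        exact hR (Finsupp.le_def.mpr fun x => by simpa [Finsupp.add_apply] using hc x)
      obtain ⟨x₀, hx₀⟩ := hex
      have hxa : x₀ = a := by
        by_contra hne
        have h := hR1' x₀
        rw [Finsupp.single_apply, if_neg (fun hh => hne hh.symm)] at h
        omega
      rw [hxa] at hx₀
      clear hxa
      have hkey : μ a + ν a = β a + 1 := by
        have h := hR1' a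
        rw [Finsupp.single_apply, if_pos rfl] at h
        omega
      have hR1x : ∀ x, x ≠ a → μ x + ν x ≤ β x := by
        intro x hx
        have h := hR1' x
        rw [Finsupp.single_apply, if_neg (fun hh => hx hh.symm)] at h
        omega
      by_cases hμ : μ ≤ β
      · have hμx : ∀ x, μ x ≤ β x := Finsupp.le_def.mp hμ
        have hνa : 1 ≤ ν a := by have := hμx a; omega
        have hν' : ν ≤ β - μ + Finsupp.single a 1 := by
          refine Finsupp.le_def.mpr fun x => ?_
          have h2 := hμx x
          by_cases hax : x = a
          · subst hax
            simp [Finsupp.tsub_apply, Finsupp.add_apply, Finsupp.single_apply]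
            omega
          · have h1 := hR1x x hax
            simp [Finsupp.tsub_apply, Finsupp.add_apply, Finsupp.single_apply,
              fun hh : a = x => hax hh.symm]
            omega
        rw [if_pos hμ, if_pos hν', if_pos hR1, if_neg hR]
        have harg : β - μ + Finsupp.single a 1 - ν + Finsupp.single b 1
            = β - (μ + ν - Finsupp.single a 1) + Finsupp.single b 1 := by
          ext x
          have h2 := hμx x
          by_cases hax : a = x <;> by_cases hbx : b = x
          · subst hax
            simp [Finsupp.tsub_apply, Finsupp.add_apply, Finsupp.single_apply, hbx]
            omega
          · subst hax
            simp [Finsupp.tsub_apply, Finsupp.add_apply, Finsupp.single_apply, hbx]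
            omega
          · have h1 := hR1x x (fun hh => hax hh.symm)
            simp [Finsupp.tsub_apply, Finsupp.add_apply, Finsupp.single_apply, hax, hbx]
            omega
          · have h1 := hR1x x (fun hh => hax hh.symm)
            simp [Finsupp.tsub_apply, Finsupp.add_apply, Finsupp.single_apply, hax, hbx]
            omega
        rw [harg]
        have e1 : (β - μ) a + 1 = ν a := by
          have h2 := hμx a
          simp only [Finsupp.tsub_apply]
          omega
        have e2 : ((β - μ + Finsupp.single a 1 - ν : MIdx)) b
            = ((β - (μ + ν - Finsupp.single a 1) : MIdx)) b := by
          have h2 := hμx b; have h3 := hμx a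
          by_cases hab : a = b
          · subst hab
            simp [Finsupp.tsub_apply, Finsupp.add_apply, Finsupp.single_apply]
            omega
          · have h1 := hR1x b (fun hh => hab hh.symm)
            simp [Finsupp.tsub_apply, Finsupp.add_apply, Finsupp.single_apply, hab]
            omega
        rw [e2, ← e1]
        push_cast
        ring
      · have hνa : ν a = 0 := by
          obtain ⟨y, hy⟩ : ∃ y, β y < μ y := by
            by_contra hc
            push_neg at hc
            exact hμ (Finsupp.le_def.mpr hc)
          have hya : y = a := by
            by_contra hne
            have h1 := hR1x y hne
            omega
          subst hya
          omega
        rw [if_neg hμ, if_neg hR, hνa]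
        simp
  · -- ¬ R1
    have hR : ¬ μ + ν ≤ β := fun h => hR1 (le_trans tsub_le_self h)
    rw [if_neg hR, if_neg hR1]
    by_cases hμ : μ ≤ β
    · have hμx : ∀ x, μ x ≤ β x := Finsupp.le_def.mp hμ
      have hν' : ¬ ν ≤ β - μ + Finsupp.single a 1 := by
        intro h
        apply hR1
        refine Finsupp.le_def.mpr fun x => ?_
        have h1 := Finsupp.le_def.mp h x
        have h2 := hμx x
        simp only [Finsupp.tsub_apply, Finsupp.add_apply] at h1 ⊢
        omega
      rw [if_pos hμ, if_neg hν']
      simp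
    · rw [if_neg hμ]
      simp

lemma elem_comm (μ ν : MIdx) (a b : Idx) (f : PS) (β : MIdx) :
    elem μ a (elem ν b f) β - elem ν b (elem μ a f) β
      = ((ν a : ℕ) : ℝ) * elem (μ + ν - Finsupp.single a 1) b f β
        - ((μ b : ℕ) : ℝ) * elem (ν + μ - Finsupp.single b 1) a f β := by
  rw [elem_comp, elem_comp]
  have h : elem2 (μ + ν) a b f = elem2 (ν + μ) b a f := by
    rw [add_comm μ ν, elem2_symm]
  rw [h]
  ring

end Stmt2Aux
namespace Stmt2Aux

noncomputable def eK (k : ℕ) : MIdx := Finsupp.single (Sum.inl k) 1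
noncomputable def eM (m : N2) : MIdx := Finsupp.single (Sum.inr m) 1
def a10 (m : N2) : N2 := ⟨m.1 + (1, 0), add10_ne m.1⟩
def a01 (m : N2) : N2 := ⟨m.1 + (0, 1), add01_ne m.1⟩

lemma a10_fst (m : N2) : (a10 m).1.1 = m.1.1 + 1 := rfl
lemma a10_inj {m m' : N2} (h : a10 m = a10 m') : m = m' := by
  apply Subtype.ext
  have h1 : m.1 + (1, 0) = m'.1 + (1, 0) := congrArg Subtype.val h
  exact add_right_cancel h1
lemma a01_inj {m m' : N2} (h : a01 m = a01 m') : m = m' := by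
  apply Subtype.ext
  have h1 : m.1 + (0, 1) = m'.1 + (0, 1) := congrArg Subtype.val h
  exact add_right_cancel h1

lemma single_le_iff_mem {i : Idx} {β : MIdx} : Finsupp.single i 1 ≤ β ↔ i ∈ β.support := by
  rw [Finsupp.single_le_iff, Finsupp.mem_support_iff]
  omega

lemma elem_apply (μ : MIdx) (a : Idx) (g : PS) (β : MIdx) :
    elem μ a g β
      = if μ ≤ β then (((β - μ) a + 1 : ℕ) : ℝ) * g (β - μ + Finsupp.single a 1) else 0 := rfl

lemma elem_zero {μ : MIdx} {a : Idx} {f : PS} {β : MIdx} (h : ¬ μ ≤ β) : elem μ a f β = 0 :=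
  if_neg h

lemma elem_sum_rep {T : Type} (μ : MIdx) (a : Idx) (g f : PS) (β : MIdx) (s : Finset T)
    (w : T → ℝ) (ν : T → MIdx) (b : T → Idx)
    (h : g (β - μ + Finsupp.single a 1)
        = ∑ t ∈ s, w t * elem (ν t) (b t) f (β - μ + Finsupp.single a 1)) :
    elem μ a g β = ∑ t ∈ s, w t * elem μ a (elem (ν t) (b t) f) β := by
  by_cases hμ : μ ≤ β
  · rw [elem_apply, if_pos hμ, h, Finset.mul_sum]
    refine Finset.sum_congr rfl fun t _ => ?_
    rw [elem_apply μ a (elem (ν t) (b t) f) β, if_pos hμ]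
    ring
  · rw [elem_apply, if_neg hμ]
    symm
    refine Finset.sum_eq_zero fun t _ => ?_
    rw [elem_apply μ a (elem (ν t) (b t) f) β, if_neg hμ, mul_zero]

lemma D0_rep (f : PS) (β : MIdx) (s : Finset ℕ)
    (hs : ∀ k, Sum.inl (k + 1) ∈ β.support → k ∈ s) :
    D0series f β = ∑ k ∈ s, ((k + 1 : ℕ) : ℝ) * elem (eK (k + 1)) (Sum.inl k) f β := by
  have hterm : ∀ k, Sum.inl (k + 1) ∈ β.support →
      (((k + 1) * (β (Sum.inl k) + 1) : ℕ) : ℝ) *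
          MvPowerSeries.coeff (R := ℝ) (β + Finsupp.single (Sum.inl k) 1
            - Finsupp.single (Sum.inl (k + 1)) 1) f
        = ((k + 1 : ℕ) : ℝ) * elem (eK (k + 1)) (Sum.inl k) f β := by
    intro k hk
    have hle : eK (k + 1) ≤ β := single_le_iff_mem.mpr hk
    rw [elem_apply, if_pos hle]
    have harg : β + Finsupp.single (Sum.inl k) 1 - Finsupp.single (Sum.inl (k + 1)) 1
        = β - eK (k + 1) + Finsupp.single (Sum.inl k) 1 := by
      ext x
      rcases eq_or_ne (Sum.inl (k + 1) : Idx) x with rfl | h2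
      · simp [eK, Finsupp.tsub_apply, Finsupp.add_apply, Finsupp.single_apply]
      · simp only [eK, Finsupp.tsub_apply, Finsupp.add_apply, Finsupp.single_apply, if_neg h2]
        split_ifs <;> omega
    have hco : ((β - eK (k + 1)) (Sum.inl k)) = β (Sum.inl k) := by
      simp [eK, Finsupp.tsub_apply, Finsupp.single_apply]
    rw [MvPowerSeries.coeff_apply, harg, hco]
    push_cast
    ring
  have hmain : D0series f β
      = ∑ i ∈ β.support, ∑ k ∈ s,
          (if i = Sum.inl (k + 1) then
            ((k + 1 : ℕ) : ℝ) * elem (eK (k + 1)) (Sum.inl k) f β else 0) := by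
    show D0coeff f β = _
    rw [D0coeff]
    refine Finset.sum_congr rfl fun i hi => ?_
    rcases i with k | p
    · match k with
      | 0 => simp
      | k + 1 =>
        rw [Finset.sum_eq_single_of_mem k (hs k hi)]
        · rw [if_pos rfl]
          exact hterm k hi
        · intro b _ hbk
          rw [if_neg]
          intro hh
          exact hbk (by injection hh with hh'; omega)
    · simp
  rw [hmain, Finset.sum_comm]
  refine Finset.sum_congr rfl fun k _ => ?_
  rw [Finset.sum_ite_eq' β.support (Sum.inl (k + 1) : Idx)]
  by_cases hmem : (Sum.inl (k + 1) : Idx) ∈ β.support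
  · rw [if_pos hmem]
  · have hne : ¬ eK (k + 1) ≤ β := fun h => hmem (single_le_iff_mem.mp h)
    rw [if_neg hmem, elem_zero hne, mul_zero]

lemma DN_eq (m : N2) (f : PS) : DNseries m f = elem 0 (Sum.inr m) f := by
  funext β
  rw [DNseries, elem_apply, if_pos (zero_le : (0 : MIdx) ≤ β), tsub_zero, MvPowerSeries.coeff_apply]

end Stmt2Aux
namespace Stmt2Aux

lemma elem_shiftM (v : N2) (μ : MIdx) (a : Idx) (f : PS) (β : MIdx)
    (hv : 1 ≤ β (Sum.inr v)) :
    elem μ a f (β - eM v) = elem (eM v + μ) a f β := by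
  have hβ : eM v ≤ β := Finsupp.single_le_iff.mpr hv
  rw [elem_apply, elem_apply, tsub_tsub]
  simp only [le_tsub_iff_left hβ]

lemma sum_support_reindex_u {F : Idx → ℝ} {β : MIdx} {u : Finset N2} {H : N2 → ℝ}
    (g : N2 → N2)
    (hF : ∀ i ∈ β.support, F i = ∑ m ∈ u, if i = Sum.inr (g m) then H m else 0)
    (hH : ∀ m ∈ u, (Sum.inr (g m) : Idx) ∉ β.support → H m = 0) :
    ∑ i ∈ β.support, F i = ∑ m ∈ u, H m := by
  rw [Finset.sum_congr rfl hF, Finset.sum_comm]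
  refine Finset.sum_congr rfl fun m hm => ?_
  rw [Finset.sum_ite_eq' β.support (Sum.inr (g m) : Idx)]
  by_cases hmem : (Sum.inr (g m) : Idx) ∈ β.support
  · rw [if_pos hmem]
  · rw [if_neg hmem]; exact (hH m hm hmem).symm

lemma d1_rep (f : PS) (β : MIdx) (s : Finset ℕ) (u : Finset N2)
    (hs : ∀ k, Sum.inl (k + 1) ∈ β.support → k ∈ s)
    (hu : ∀ m : N2, (Sum.inr (a10 m) : Idx) ∈ β.support → m ∈ u) :
    d1series f β = (∑ k ∈ s, ((k + 1 : ℕ) : ℝ) * elem (eM v10 + eK (k + 1)) (Sum.inl k) f β)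
      + ∑ m ∈ u, ((m.1.1 + 1 : ℕ) : ℝ) * elem (eM (a10 m)) (Sum.inr m) f β := by
  show d1coeff f β = _
  unfold d1coeff
  congr 1
  · -- shifted D0 part
    by_cases hv : 1 ≤ β (Sum.inr v10)
    · rw [if_pos hv]
      have hsup : ∀ k, Sum.inl (k + 1) ∈ (β - eM v10).support → k ∈ s := by
        intro k hk
        apply hs
        have he : (β - eM v10) (Sum.inl (k + 1)) = β (Sum.inl (k + 1)) := by
          simp [eM, Finsupp.tsub_apply, Finsupp.single_apply]
        rw [Finsupp.mem_support_iff] at hk ⊢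
        rwa [he] at hk
      have h0 : D0coeff f (β - Finsupp.single (Sum.inr v10) 1) = D0series f (β - eM v10) := rfl
      rw [h0, D0_rep f (β - eM v10) s hsup]
      refine Finset.sum_congr rfl fun k _ => ?_
      rw [elem_shiftM v10 (eK (k + 1)) (Sum.inl k) f β hv]
    · rw [if_neg hv]
      symm
      refine Finset.sum_eq_zero fun k _ => ?_
      have hne : ¬ eM v10 + eK (k + 1) ≤ β := by
        intro hle
        apply hv
        have h1 := Finsupp.le_def.mp hle (Sum.inr v10)
        simpa [eM, eK, Finsupp.add_apply, Finsupp.single_apply] using h1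
      rw [elem_zero hne, mul_zero]
  · -- tilt part
    have hterm : ∀ (p : N2), (Sum.inr p : Idx) ∈ β.support →
        (if hp : ((p.1.1 - 1, p.1.2) : ℕ × ℕ) ≠ (0, 0) ∧ 1 ≤ p.1.1 then
            (p.1.1 : ℝ) *
              ((((β - Finsupp.single (Sum.inr p) 1 : MIdx)
                  (Sum.inr ⟨(p.1.1 - 1, p.1.2), hp.1⟩) : ℕ) + 1 : ℕ) : ℝ) *
              MvPowerSeries.coeff (R := ℝ)
                (β - Finsupp.single (Sum.inr p) 1 +
                  Finsupp.single (Sum.inr ⟨(p.1.1 - 1, p.1.2), hp.1⟩) 1) f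
          else 0)
        = ∑ m ∈ u, (if (Sum.inr p : Idx) = Sum.inr (a10 m) then
            ((m.1.1 + 1 : ℕ) : ℝ) * elem (eM (a10 m)) (Sum.inr m) f β else 0) := by
      intro p hi
      by_cases hp : ((p.1.1 - 1, p.1.2) : ℕ × ℕ) ≠ (0, 0) ∧ 1 ≤ p.1.1
      · rw [dif_pos hp]
        have hpm : a10 (⟨(p.1.1 - 1, p.1.2), hp.1⟩ : N2) = p := by
          apply Subtype.ext
          have h2 := hp.2
          apply Prod.ext <;> simp [a10] <;> omega
        rw [Finset.sum_eq_single_of_mem (⟨(p.1.1 - 1, p.1.2), hp.1⟩ : N2)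
            (hu _ (by rwa [hpm]))]
        · rw [if_pos (by rw [hpm]), hpm, elem_apply]
          have hle : eM p ≤ β := single_le_iff_mem.mpr hi
          rw [if_pos hle, MvPowerSeries.coeff_apply]
          have e1 : ((⟨(p.1.1 - 1, p.1.2), hp.1⟩ : N2).1.1 + 1 : ℕ) = p.1.1 := by
            show p.1.1 - 1 + 1 = p.1.1
            have := hp.2
            omega
          rw [e1]
          show (p.1.1 : ℝ) * _ * _ = _
          rw [show eM p = Finsupp.single (Sum.inr p : Idx) 1 from rfl]
          push_cast
          ring
        · intro m _ hmne
          rw [if_neg]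
          intro hh
          apply hmne
          have h1 : a10 m = p := (Sum.inr.injEq _ _ ▸ hh).symm
          exact a10_inj (h1.trans hpm.symm)
      · rw [dif_neg hp]
        symm
        refine Finset.sum_eq_zero fun m _ => ?_
        rw [if_neg]
        intro hh
        apply hp
        have h1 : p = a10 m := by injection hh
        constructor
        · have : ((p.1.1 - 1, p.1.2) : ℕ × ℕ) = m.1 := by
            rw [h1]
            apply Prod.ext <;> simp [a10]
          rw [this]; exact m.2
        · rw [h1]
          show 1 ≤ m.1.1 + 1
          omega
    refine sum_support_reindex_u a10 (fun i hi => ?_) (fun m _ hmem => ?_)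
    · rcases i with k | p
      · simp
      · exact hterm p hi
    · have hne : ¬ eM (a10 m) ≤ β := fun h => hmem (single_le_iff_mem.mp h)
      rw [elem_zero hne, mul_zero]

lemma d2_rep (f : PS) (β : MIdx) (s : Finset ℕ) (u : Finset N2)
    (hs : ∀ k, Sum.inl (k + 1) ∈ β.support → k ∈ s)
    (hu : ∀ m : N2, (Sum.inr (a01 m) : Idx) ∈ β.support → m ∈ u) :
    d2series f β = (∑ k ∈ s, ((k + 1 : ℕ) : ℝ) * elem (eM v01 + eK (k + 1)) (Sum.inl k) f β)
      + ∑ m ∈ u, ((m.1.2 + 1 : ℕ) : ℝ) * elem (eM (a01 m)) (Sum.inr m) f β := by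
  show d2coeff f β = _
  unfold d2coeff
  congr 1
  · by_cases hv : 1 ≤ β (Sum.inr v01)
    · rw [if_pos hv]
      have hsup : ∀ k, Sum.inl (k + 1) ∈ (β - eM v01).support → k ∈ s := by
        intro k hk
        apply hs
        have he : (β - eM v01) (Sum.inl (k + 1)) = β (Sum.inl (k + 1)) := by
          simp [eM, Finsupp.tsub_apply, Finsupp.single_apply]
        rw [Finsupp.mem_support_iff] at hk ⊢
        rwa [he] at hk
      have h0 : D0coeff f (β - Finsupp.single (Sum.inr v01) 1) = D0series f (β - eM v01) := rfl
      rw [h0, D0_rep f (β - eM v01) s hsup]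
      refine Finset.sum_congr rfl fun k _ => ?_
      rw [elem_shiftM v01 (eK (k + 1)) (Sum.inl k) f β hv]
    · rw [if_neg hv]
      symm
      refine Finset.sum_eq_zero fun k _ => ?_
      have hne : ¬ eM v01 + eK (k + 1) ≤ β := by
        intro hle
        apply hv
        have h1 := Finsupp.le_def.mp hle (Sum.inr v01)
        simpa [eM, eK, Finsupp.add_apply, Finsupp.single_apply] using h1
      rw [elem_zero hne, mul_zero]
  · have hterm : ∀ (p : N2), (Sum.inr p : Idx) ∈ β.support →
        (if hp : ((p.1.1, p.1.2 - 1) : ℕ × ℕ) ≠ (0, 0) ∧ 1 ≤ p.1.2 then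
            (p.1.2 : ℝ) *
              ((((β - Finsupp.single (Sum.inr p) 1 : MIdx)
                  (Sum.inr ⟨(p.1.1, p.1.2 - 1), hp.1⟩) : ℕ) + 1 : ℕ) : ℝ) *
              MvPowerSeries.coeff (R := ℝ)
                (β - Finsupp.single (Sum.inr p) 1 +
                  Finsupp.single (Sum.inr ⟨(p.1.1, p.1.2 - 1), hp.1⟩) 1) f
          else 0)
        = ∑ m ∈ u, (if (Sum.inr p : Idx) = Sum.inr (a01 m) then
            ((m.1.2 + 1 : ℕ) : ℝ) * elem (eM (a01 m)) (Sum.inr m) f β else 0) := by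
      intro p hi
      by_cases hp : ((p.1.1, p.1.2 - 1) : ℕ × ℕ) ≠ (0, 0) ∧ 1 ≤ p.1.2
      · rw [dif_pos hp]
        have hpm : a01 (⟨(p.1.1, p.1.2 - 1), hp.1⟩ : N2) = p := by
          apply Subtype.ext
          have h2 := hp.2
          apply Prod.ext <;> simp [a01] <;> omega
        rw [Finset.sum_eq_single_of_mem (⟨(p.1.1, p.1.2 - 1), hp.1⟩ : N2)
            (hu _ (by rwa [hpm]))]
        · rw [if_pos (by rw [hpm]), hpm, elem_apply]
          have hle : eM p ≤ β := single_le_iff_mem.mpr hi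
          rw [if_pos hle, MvPowerSeries.coeff_apply]
          have e1 : ((⟨(p.1.1, p.1.2 - 1), hp.1⟩ : N2).1.2 + 1 : ℕ) = p.1.2 := by
            show p.1.2 - 1 + 1 = p.1.2
            have := hp.2
            omega
          rw [e1]
          show (p.1.2 : ℝ) * _ * _ = _
          rw [show eM p = Finsupp.single (Sum.inr p : Idx) 1 from rfl]
          push_cast
          ring
        · intro m _ hmne
          rw [if_neg]
          intro hh
          apply hmne
          have h1 : a01 m = p := (Sum.inr.injEq _ _ ▸ hh).symm
          exact a01_inj (h1.trans hpm.symm)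
      · rw [dif_neg hp]
        symm
        refine Finset.sum_eq_zero fun m _ => ?_
        rw [if_neg]
        intro hh
        apply hp
        have h1 : p = a01 m := by injection hh
        constructor
        · have : ((p.1.1, p.1.2 - 1) : ℕ × ℕ) = m.1 := by
            rw [h1]
            apply Prod.ext <;> simp [a01]
          rw [this]; exact m.2
        · rw [h1]
          show 1 ≤ m.1.2 + 1
          omega
    refine sum_support_reindex_u a01 (fun i hi => ?_) (fun m _ hmem => ?_)
    · rcases i with k | p
      · simp
      · exact hterm p hi
    · have hne : ¬ eM (a01 m) ≤ β := fun h => hmem (single_le_iff_mem.mp h)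
      rw [elem_zero hne, mul_zero]

end Stmt2Aux
namespace Stmt2Aux

example (x y : MIdx) : x + y - y = x := add_tsub_cancel_right x y
example (x y : MIdx) : x + y - x = y := add_tsub_cancel_left x y

def scov (β : MIdx) : Finset ℕ :=
  (β.support.image (fun i => match i with | Sum.inl k => k | Sum.inr _ => 0)).biUnion
    (fun j => Finset.range (j + 1))

lemma scov_mem {β : MIdx} {j k : ℕ} (hj : Sum.inl j ∈ β.support) (hk : k ≤ j) : k ∈ scov β :=
  Finset.mem_biUnion.mpr ⟨j, Finset.mem_image.mpr ⟨Sum.inl j, hj, rfl⟩,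
    Finset.mem_range.mpr (by omega)⟩

lemma scov_down {β : MIdx} {k k' : ℕ} (h : k ∈ scov β) (hk : k' ≤ k) : k' ∈ scov β := by
  obtain ⟨j, hj, hr⟩ := Finset.mem_biUnion.mp h
  have := Finset.mem_range.mp hr
  exact Finset.mem_biUnion.mpr ⟨j, hj, Finset.mem_range.mpr (by omega)⟩

def ucov (β : MIdx) : Finset N2 :=
  Finset.subtype _
    ((β.support.image
        (fun i => match i with | Sum.inl _ => ((0, 0) : ℕ × ℕ) | Sum.inr p => p.1)).biUnion
      (fun q => Finset.range (q.1 + 1) ×ˢ Finset.range (q.2 + 1)))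

lemma ucov_mem {β : MIdx} {p : N2} (hp : (Sum.inr p : Idx) ∈ β.support) {m : N2}
    (h1 : m.1.1 ≤ p.1.1) (h2 : m.1.2 ≤ p.1.2) : m ∈ ucov β := by
  simp only [ucov, Finset.mem_subtype]
  refine Finset.mem_biUnion.mpr ⟨p.1, Finset.mem_image.mpr ⟨Sum.inr p, hp, rfl⟩, ?_⟩
  exact Finset.mem_product.mpr ⟨Finset.mem_range.mpr (by omega), Finset.mem_range.mpr (by omega)⟩

lemma ucov_down {β : MIdx} {m m' : N2} (h : m ∈ ucov β) (h1 : m'.1.1 ≤ m.1.1)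
    (h2 : m'.1.2 ≤ m.1.2) : m' ∈ ucov β := by
  simp only [ucov, Finset.mem_subtype] at h ⊢
  obtain ⟨q, hq, hr⟩ := Finset.mem_biUnion.mp h
  have hr1 := Finset.mem_range.mp (Finset.mem_product.mp hr).1
  have hr2 := Finset.mem_range.mp (Finset.mem_product.mp hr).2
  exact Finset.mem_biUnion.mpr ⟨q, hq,
    Finset.mem_product.mpr ⟨Finset.mem_range.mpr (by omega), Finset.mem_range.mpr (by omega)⟩⟩

lemma shift_support {β μ : MIdx} {a i : Idx} (h : i ∈ (β - μ + Finsupp.single a 1).support) :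
    i ∈ β.support ∨ i = a := by
  by_cases hia : i = a
  · right; exact hia
  · left
    rw [Finsupp.mem_support_iff] at h ⊢
    intro h0
    apply h
    have : a ≠ i := fun hh => hia hh.symm
    simp [Finsupp.add_apply, Finsupp.tsub_apply, Finsupp.single_apply, h0, this]

lemma double_comm {T1 T2 : Type} (s1 : Finset T1) (s2 : Finset T2)
    (w1 : T1 → ℝ) (μ1 : T1 → MIdx) (a1 : T1 → Idx)
    (w2 : T2 → ℝ) (μ2 : T2 → MIdx) (a2 : T2 → Idx) (f : PS) (β : MIdx) :
    (∑ t ∈ s1, w1 t * (∑ t' ∈ s2, w2 t' * elem (μ1 t) (a1 t) (elem (μ2 t') (a2 t') f) β))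
      - (∑ t' ∈ s2, w2 t' * (∑ t ∈ s1, w1 t * elem (μ2 t') (a2 t') (elem (μ1 t) (a1 t) f) β))
      = ∑ t ∈ s1, ∑ t' ∈ s2, w1 t * w2 t' *
          (((μ2 t' (a1 t) : ℕ) : ℝ) * elem (μ1 t + μ2 t' - Finsupp.single (a1 t) 1) (a2 t') f β
            - ((μ1 t (a2 t') : ℕ) : ℝ)
                * elem (μ2 t' + μ1 t - Finsupp.single (a2 t') 1) (a1 t) f β) := by
  have e1 : (∑ t ∈ s1, w1 t * (∑ t' ∈ s2, w2 t' * elem (μ1 t) (a1 t) (elem (μ2 t') (a2 t') f) β))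
      = ∑ t ∈ s1, ∑ t' ∈ s2, w1 t * (w2 t' * elem (μ1 t) (a1 t) (elem (μ2 t') (a2 t') f) β) :=
    Finset.sum_congr rfl fun t _ => Finset.mul_sum _ _ _
  have e2 : (∑ t' ∈ s2, w2 t' * (∑ t ∈ s1, w1 t * elem (μ2 t') (a2 t') (elem (μ1 t) (a1 t) f) β))
      = ∑ t ∈ s1, ∑ t' ∈ s2, w2 t' * (w1 t * elem (μ2 t') (a2 t') (elem (μ1 t) (a1 t) f) β) := by
    rw [Finset.sum_congr rfl fun t' (_ : t' ∈ s2) => Finset.mul_sum s1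
      (fun t => w1 t * elem (μ2 t') (a2 t') (elem (μ1 t) (a1 t) f) β) (w2 t')]
    exact Finset.sum_comm
  rw [e1, e2, ← Finset.sum_sub_distrib]
  refine Finset.sum_congr rfl fun t _ => ?_
  rw [← Finset.sum_sub_distrib]
  refine Finset.sum_congr rfl fun t' _ => ?_
  have h := elem_comm (μ1 t) (μ2 t') (a1 t) (a2 t') f β
  calc w1 t * (w2 t' * elem (μ1 t) (a1 t) (elem (μ2 t') (a2 t') f) β)
        - w2 t' * (w1 t * elem (μ2 t') (a2 t') (elem (μ1 t) (a1 t) f) β)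
      = w1 t * w2 t' * (elem (μ1 t) (a1 t) (elem (μ2 t') (a2 t') f) β
          - elem (μ2 t') (a2 t') (elem (μ1 t) (a1 t) f) β) := by ring
    _ = _ := by rw [h]

lemma single_double (μ0 : MIdx) (a0 : Idx) {T2 : Type} (s2 : Finset T2)
    (w2 : T2 → ℝ) (μ2 : T2 → MIdx) (a2 : T2 → Idx) (f : PS) (β : MIdx) :
    (∑ t' ∈ s2, w2 t' * elem μ0 a0 (elem (μ2 t') (a2 t') f) β)
      - (∑ t' ∈ s2, w2 t' * elem (μ2 t') (a2 t') (elem μ0 a0 f) β)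
      = ∑ t' ∈ s2, w2 t' *
          (((μ2 t' a0 : ℕ) : ℝ) * elem (μ0 + μ2 t' - Finsupp.single a0 1) (a2 t') f β
            - ((μ0 (a2 t') : ℕ) : ℝ) * elem (μ2 t' + μ0 - Finsupp.single (a2 t') 1) a0 f β) := by
  rw [← Finset.sum_sub_distrib]
  refine Finset.sum_congr rfl fun t' _ => ?_
  rw [← mul_sub, elem_comm]

end Stmt2Aux
namespace Stmt2Aux

lemma scov_valid (β : MIdx) : ∀ k, Sum.inl (k + 1) ∈ β.support → k ∈ scov β :=
  fun _ hk => scov_mem hk (by omega)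

lemma commNN (m m' : N2) (f : PS) :
    DNseries m (DNseries m' f) = DNseries m' (DNseries m f) := by
  funext β
  rw [DN_eq m' f, DN_eq m (elem 0 (Sum.inr m') f), DN_eq m f,
    DN_eq m' (elem 0 (Sum.inr m) f)]
  have h := elem_comm 0 0 (Sum.inr m) (Sum.inr m') f β
  simp only [Finsupp.coe_zero, Pi.zero_apply, Nat.cast_zero, zero_mul, sub_zero,
    zero_sub, neg_zero] at h
  linarith
  
lemma comm0N (m : N2) (f : PS) :
    D0series (DNseries m f) = DNseries m (D0series f) := by
  funext β
  rw [DN_eq m f, DN_eq m (D0series f)]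
  rw [D0_rep (elem 0 (Sum.inr m) f) β (scov β) (scov_valid β)]
  have hs' : ∀ k, Sum.inl (k + 1) ∈ (β - 0 + Finsupp.single (Sum.inr m) 1).support →
      k ∈ scov β := by
    intro k hk
    rcases shift_support hk with h | h
    · exact scov_valid β k h
    · exact absurd h (by simp)
  rw [elem_sum_rep 0 (Sum.inr m) (D0series f) f β (scov β) (fun k => ((k + 1 : ℕ) : ℝ))
    (fun k => eK (k + 1)) (fun k => Sum.inl k) (D0_rep f _ (scov β) hs')]
  refine Finset.sum_congr rfl fun k _ => ?_
  congr 1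
  have h := elem_comm (eK (k + 1)) 0 (Sum.inl k) (Sum.inr m) f β
  have z2 : ((eK (k + 1)) (Sum.inr m) : ℕ) = 0 := by simp [eK, Finsupp.single_apply]
  rw [z2] at h
  simp only [Finsupp.coe_zero, Pi.zero_apply, Nat.cast_zero, zero_mul, sub_zero] at h
  linarith

lemma partA : ∀ n n' : ℕ × ℕ, ∀ f : PS, Dseries n (Dseries n' f) = Dseries n' (Dseries n f) := by
  intro n n' f
  by_cases h : n = (0, 0) <;> by_cases h' : n' = (0, 0)
  · subst h; subst h'; rfl
  · subst h
    simp only [Dseries, dif_pos rfl, dif_neg h']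
    exact comm0N ⟨n', h'⟩ f
  · subst h'
    simp only [Dseries, dif_pos rfl, dif_neg h]
    exact (comm0N ⟨n, h⟩ f).symm
  · simp only [Dseries, dif_neg h, dif_neg h']
    exact commNN ⟨n, h⟩ ⟨n', h'⟩ f

end Stmt2Aux
namespace Stmt2Aux

noncomputable def W1 : ℕ ⊕ N2 → ℝ :=
  Sum.elim (fun k => ((k + 1 : ℕ) : ℝ)) (fun m => ((m.1.1 + 1 : ℕ) : ℝ))
noncomputable def M1 : ℕ ⊕ N2 → MIdx :=
  Sum.elim (fun k => eM v10 + eK (k + 1)) (fun m => eM (a10 m))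
def A1 : ℕ ⊕ N2 → Idx := Sum.elim (fun k => Sum.inl k) (fun m => Sum.inr m)
noncomputable def W2 : ℕ ⊕ N2 → ℝ :=
  Sum.elim (fun k => ((k + 1 : ℕ) : ℝ)) (fun m => ((m.1.2 + 1 : ℕ) : ℝ))
noncomputable def M2 : ℕ ⊕ N2 → MIdx :=
  Sum.elim (fun k => eM v01 + eK (k + 1)) (fun m => eM (a01 m))
def A2 : ℕ ⊕ N2 → Idx := Sum.elim (fun k => Sum.inl k) (fun m => Sum.inr m)

lemma d1_rep' (f : PS) (β : MIdx) (s : Finset ℕ) (u : Finset N2)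
    (hs : ∀ k, Sum.inl (k + 1) ∈ β.support → k ∈ s)
    (hu : ∀ m : N2, (Sum.inr (a10 m) : Idx) ∈ β.support → m ∈ u) :
    d1series f β = ∑ t ∈ s.disjSum u, W1 t * elem (M1 t) (A1 t) f β := by
  rw [d1_rep f β s u hs hu, Finset.sum_disjSum]
  simp only [W1, M1, A1, Sum.elim_inl, Sum.elim_inr]

lemma d2_rep' (f : PS) (β : MIdx) (s : Finset ℕ) (u : Finset N2)
    (hs : ∀ k, Sum.inl (k + 1) ∈ β.support → k ∈ s)
    (hu : ∀ m : N2, (Sum.inr (a01 m) : Idx) ∈ β.support → m ∈ u) :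
    d2series f β = ∑ t ∈ s.disjSum u, W2 t * elem (M2 t) (A2 t) f β := by
  rw [d2_rep f β s u hs hu, Finset.sum_disjSum]
  simp only [W2, M2, A2, Sum.elim_inl, Sum.elim_inr]

-- delta evaluation lemmas
lemma dMl (p : N2) (k : ℕ) : (eM p) (Sum.inl k) = 0 := by
  simp [eM, Finsupp.single_apply]
lemma dKr (j : ℕ) (m : N2) : (eK j) (Sum.inr m) = 0 := by
  simp [eK, Finsupp.single_apply]
lemma dKl (j i : ℕ) : (eK j) (Sum.inl i) = if j = i then 1 else 0 := by
  simp [eK, Finsupp.single_apply]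
lemma dMr (p m : N2) : (eM p) (Sum.inr m) = if p = m then 1 else 0 := by
  simp [eM, Finsupp.single_apply]
lemma dKMl (v : N2) (j i : ℕ) : (eM v + eK j) (Sum.inl i) = if j = i then 1 else 0 := by
  simp [eM, eK, Finsupp.add_apply, Finsupp.single_apply]
lemma dKMr (v : N2) (j : ℕ) (m : N2) : (eM v + eK j) (Sum.inr m) = if v = m then 1 else 0 := by
  simp [eM, eK, Finsupp.add_apply, Finsupp.single_apply]
lemma dZ (a : Idx) : ((0 : MIdx)) a = 0 := rfl

-- multi-index identities
lemma midxCK (j : ℕ) :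
    eK (j + 1 + 1) + (eM v10 + eK (j + 1)) - Finsupp.single (Sum.inl (j + 1)) 1
      = eM v10 + eK (j + 1 + 1) := by
  show eK (j + 1 + 1) + (eM v10 + eK (j + 1)) - eK (j + 1) = eM v10 + eK (j + 1 + 1)
  rw [← add_assoc, add_tsub_cancel_right, add_comm]

lemma midxCK' (j : ℕ) :
    eK (j + 1 + 1) + (eM v01 + eK (j + 1)) - Finsupp.single (Sum.inl (j + 1)) 1
      = eM v01 + eK (j + 1 + 1) := by
  show eK (j + 1 + 1) + (eM v01 + eK (j + 1)) - eK (j + 1) = eM v01 + eK (j + 1 + 1)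
  rw [← add_assoc, add_tsub_cancel_right, add_comm]

lemma midxCK2 (v : N2) (j : ℕ) :
    (eM v + eK (j + 1 + 1)) + eK (j + 1) - Finsupp.single (Sum.inl (j + 1)) 1
      = eM v + eK (j + 1 + 1) := by
  show (eM v + eK (j + 1 + 1)) + eK (j + 1) - eK (j + 1) = eM v + eK (j + 1 + 1)
  rw [add_tsub_cancel_right]

lemma midxB1 (j : ℕ) :
    (eM v10 + eK (j + 1 + 1)) + (eM v01 + eK (j + 1)) - Finsupp.single (Sum.inl (j + 1)) 1
      = eM v10 + (eM v01 + eK (j + 1 + 1)) := by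
  show (eM v10 + eK (j + 1 + 1)) + (eM v01 + eK (j + 1)) - eK (j + 1) = _
  rw [← add_assoc, add_tsub_cancel_right]
  abel

lemma midxB2 (j : ℕ) :
    (eM v01 + eK (j + 1 + 1)) + (eM v10 + eK (j + 1)) - Finsupp.single (Sum.inl (j + 1)) 1
      = eM v10 + (eM v01 + eK (j + 1 + 1)) := by
  show (eM v01 + eK (j + 1 + 1)) + (eM v10 + eK (j + 1)) - eK (j + 1) = _
  rw [← add_assoc, add_tsub_cancel_right]
  abel

lemma midxM (x : MIdx) (m : N2) : x + eM m - Finsupp.single (Sum.inr m) 1 = x :=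
  add_tsub_cancel_right x (eM m)

lemma midxKM (x : MIdx) (v : N2) (y : MIdx) :
    x + (eM v + y) - Finsupp.single (Sum.inr v) 1 = x + y := by
  show x + (eM v + y) - eM v = x + y
  rw [add_left_comm]
  exact add_tsub_cancel_left (eM v) (x + y)

lemma midxZKM (v : N2) (y : MIdx) :
    (0 : MIdx) + (eM v + y) - Finsupp.single (Sum.inr v) 1 = y := by
  rw [zero_add]
  exact add_tsub_cancel_left (eM v) y

lemma midxZM (m : N2) : (0 : MIdx) + eM m - Finsupp.single (Sum.inr m) 1 = 0 := by
  rw [zero_add]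
  exact tsub_self (eM m)

lemma acomm (j : N2) : a10 (a01 j) = a01 (a10 j) := by
  apply Subtype.ext
  show j.1 + (0, 1) + (1, 0) = j.1 + (1, 0) + (0, 1)
  rw [add_right_comm]

lemma a10v01 : a10 v01 = a01 v10 := by
  apply Subtype.ext
  decide

-- ite-sum collapsing
lemma sum_sum_ite_left (s : Finset ℕ) (C : ℕ → ℕ → ℝ) :
    ∑ k ∈ s, ∑ k' ∈ s, (if k = k' + 1 then C k k' else 0)
      = ∑ k' ∈ s, (if k' + 1 ∈ s then C (k' + 1) k' else 0) := by
  rw [Finset.sum_comm]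
  exact Finset.sum_congr rfl fun k' _ => Finset.sum_ite_eq' s (k' + 1) (fun k => C k k')

lemma sum_sum_ite_right (s : Finset ℕ) (C : ℕ → ℕ → ℝ) :
    ∑ k ∈ s, ∑ k' ∈ s, (if k' = k + 1 then C k k' else 0)
      = ∑ k ∈ s, (if k + 1 ∈ s then C k (k + 1) else 0) :=
  Finset.sum_congr rfl fun k _ => Finset.sum_ite_eq' s (k + 1) (C k)

end Stmt2Aux
namespace Stmt2Aux

lemma mem_u_a10 {β : MIdx} {m : N2} (hm : (Sum.inr (a10 m) : Idx) ∈ β.support) : m ∈ ucov β := by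
  refine ucov_mem hm ?_ ?_
  · show m.1.1 ≤ m.1.1 + 1; omega
  · show m.1.2 ≤ m.1.2 + 0; omega

lemma mem_u_a01 {β : MIdx} {m : N2} (hm : (Sum.inr (a01 m) : Idx) ∈ β.support) : m ∈ ucov β := by
  refine ucov_mem hm ?_ ?_
  · show m.1.1 ≤ m.1.1 + 0; omega
  · show m.1.2 ≤ m.1.2 + 1; omega

lemma partC0 (f : PS) (β : MIdx) :
    D0series (d1series f) β - d1series (D0series f) β = 0 := by
  rw [D0_rep (d1series f) β (scov β) (scov_valid β)]
  have hL : ∀ k ∈ scov β,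
      ((k + 1 : ℕ) : ℝ) * elem (eK (k + 1)) (Sum.inl k) (d1series f) β
        = ((k + 1 : ℕ) : ℝ) * (∑ t' ∈ (scov β).disjSum (ucov β),
            W1 t' * elem (eK (k + 1)) (Sum.inl k) (elem (M1 t') (A1 t') f) β) := by
    intro k hk
    congr 1
    refine elem_sum_rep _ _ _ f β _ W1 M1 A1 ?_
    refine d1_rep' f _ (scov β) (ucov β) ?_ ?_
    · intro j hj
      rcases shift_support hj with h | h
      · exact scov_valid β j h
      · injection h with h'
        exact scov_down hk (by omega)
    · intro m' hm'
      rcases shift_support hm' with h | h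
      · exact mem_u_a10 h
      · exact absurd h (by simp)
  rw [Finset.sum_congr rfl hL]
  rw [d1_rep' (D0series f) β (scov β) (ucov β) (scov_valid β) (fun m hm => mem_u_a10 hm)]
  have hR : ∀ t' ∈ (scov β).disjSum (ucov β),
      W1 t' * elem (M1 t') (A1 t') (D0series f) β
        = W1 t' * (∑ k ∈ scov β, ((k + 1 : ℕ) : ℝ) * elem (M1 t') (A1 t')
            (elem (eK (k + 1)) (Sum.inl k) f) β) := by
    intro t' ht'
    congr 1
    refine elem_sum_rep _ _ _ f β (scov β) (fun k => ((k + 1 : ℕ) : ℝ))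
      (fun k => eK (k + 1)) (fun k => Sum.inl k) ?_
    refine D0_rep f _ (scov β) ?_
    intro j hj
    rcases shift_support hj with h | h
    · exact scov_valid β j h
    · rcases t' with k0 | m0
      · simp only [A1, Sum.elim_inl] at h
        injection h with h'
        exact scov_down (Finset.inl_mem_disjSum.mp ht') (by omega)
      · simp only [A1, Sum.elim_inr] at h
        exact absurd h (by simp)
  rw [Finset.sum_congr rfl hR]
  rw [double_comm (scov β) ((scov β).disjSum (ucov β)) (fun k => ((k + 1 : ℕ) : ℝ))
    (fun k => eK (k + 1)) (fun k => Sum.inl k) W1 M1 A1 f β]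
  simp only [Finset.sum_disjSum, W1, M1, A1, Sum.elim_inl, Sum.elim_inr]
  rw [Finset.sum_add_distrib]
  have h2 : (∑ k ∈ scov β, ∑ m' ∈ ucov β, ((k + 1 : ℕ) : ℝ) * ((m'.1.1 + 1 : ℕ) : ℝ) *
      (((eM (a10 m') (Sum.inl k) : ℕ) : ℝ) *
          elem (eK (k + 1) + eM (a10 m') - Finsupp.single (Sum.inl k) 1) (Sum.inr m') f β
        - ((eK (k + 1) (Sum.inr m') : ℕ) : ℝ) *
          elem (eM (a10 m') + eK (k + 1) - Finsupp.single (Sum.inr m') 1) (Sum.inl k) f β))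
      = 0 := by
    refine Finset.sum_eq_zero fun k _ => Finset.sum_eq_zero fun m' _ => ?_
    simp [dMl, dKr]
  rw [h2, add_zero]
  have hT1 : ∀ k ∈ scov β, ∀ k' ∈ scov β,
      ((k + 1 : ℕ) : ℝ) * ((k' + 1 : ℕ) : ℝ) *
        ((((eM v10 + eK (k' + 1)) (Sum.inl k) : ℕ) : ℝ) *
            elem (eK (k + 1) + (eM v10 + eK (k' + 1)) - Finsupp.single (Sum.inl k) 1)
              (Sum.inl k') f β
          - (((eK (k + 1)) (Sum.inl k') : ℕ) : ℝ) *
            elem ((eM v10 + eK (k' + 1)) + eK (k + 1) - Finsupp.single (Sum.inl k') 1)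
              (Sum.inl k) f β)
      = (if k = k' + 1 then
            ((k' + 1 : ℕ) : ℝ) * ((k' + 1 + 1 : ℕ) : ℝ)
              * elem (eM v10 + eK (k' + 1 + 1)) (Sum.inl k') f β else 0)
        - (if k' = k + 1 then
            ((k + 1 : ℕ) : ℝ) * ((k + 1 + 1 : ℕ) : ℝ)
              * elem (eM v10 + eK (k + 1 + 1)) (Sum.inl k) f β else 0) := by
    intro k _ k' _
    rw [dKMl, dKl]
    rcases eq_or_ne k (k' + 1) with rfl | h1
    · rw [if_pos rfl, if_pos rfl, if_neg (by omega : ¬ (k' + 1) + 1 = k'),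
        if_neg (by omega : ¬ k' = (k' + 1) + 1), midxCK k']
      push_cast
      ring
    · rcases eq_or_ne k' (k + 1) with rfl | h2
      · rw [if_neg (by omega : ¬ (k + 1) + 1 = k), if_neg h1, if_pos rfl, if_pos rfl,
          midxCK2 v10 k]
        push_cast
        ring
      · rw [if_neg (fun hh => h1 hh.symm), if_neg (fun hh => h2 hh.symm),
          if_neg h1, if_neg h2]
        push_cast
        ring
  rw [Finset.sum_congr rfl (fun k hk => Finset.sum_congr rfl (fun k' hk' => hT1 k hk k' hk'))]
  simp only [Finset.sum_sub_distrib]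
  rw [sum_sum_ite_left (scov β) (fun _ k' => ((k' + 1 : ℕ) : ℝ) * ((k' + 1 + 1 : ℕ) : ℝ)
      * elem (eM v10 + eK (k' + 1 + 1)) (Sum.inl k') f β),
    sum_sum_ite_right (scov β) (fun k _ => ((k + 1 : ℕ) : ℝ) * ((k + 1 + 1 : ℕ) : ℝ)
      * elem (eM v10 + eK (k + 1 + 1)) (Sum.inl k) f β)]
  exact sub_self _

def uext (β : MIdx) (n : ℕ × ℕ) : Finset N2 :=
  if h : ((n.1 - 1, n.2) : ℕ × ℕ) ≠ (0, 0) then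
    insert (⟨(n.1 - 1, n.2), h⟩ : N2) (ucov β) else ucov β

lemma uext_sub {β : MIdx} {n : ℕ × ℕ} {m : N2} (h : m ∈ ucov β) : m ∈ uext β n := by
  unfold uext
  split_ifs
  · exact Finset.mem_insert_of_mem h
  · exact h

lemma uext_self {β : MIdx} {n : ℕ × ℕ} (h : ((n.1 - 1, n.2) : ℕ × ℕ) ≠ (0, 0)) :
    (⟨(n.1 - 1, n.2), h⟩ : N2) ∈ uext β n := by
  unfold uext
  rw [dif_pos h]
  exact Finset.mem_insert_self _ _

lemma partCn (n : ℕ × ℕ) (hn : n ≠ (0, 0)) (f : PS) (β : MIdx) :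
    DNseries ⟨n, hn⟩ (d1series f) β - d1series (DNseries ⟨n, hn⟩ f) β
      = (n.1 : ℝ) * Dseries (n.1 - 1, n.2) f β := by
  rw [DN_eq ⟨n, hn⟩ (d1series f), DN_eq ⟨n, hn⟩ f]
  have h1 : elem 0 (Sum.inr ⟨n, hn⟩) (d1series f) β
      = ∑ t' ∈ (scov β).disjSum (uext β n),
          W1 t' * elem 0 (Sum.inr ⟨n, hn⟩) (elem (M1 t') (A1 t') f) β := by
    refine elem_sum_rep _ _ _ f β _ W1 M1 A1 ?_
    refine d1_rep' f _ (scov β) (uext β n) ?_ ?_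
    · intro j hj
      rcases shift_support hj with h | h
      · exact scov_valid β j h
      · exact absurd h (by simp)
    · intro m' hm'
      rcases shift_support hm' with h | h
      · exact uext_sub (mem_u_a10 h)
      · have hmn : a10 m' = (⟨n, hn⟩ : N2) := by
          injection h
        have h2 : m'.1 + (1, 0) = n := congrArg Subtype.val hmn
        have h2a : m'.1.1 + 1 = n.1 := by
          have := congrArg (Prod.fst : ℕ × ℕ → ℕ) h2; simpa using this
        have h2b : m'.1.2 = n.2 := by
          have := congrArg (Prod.snd : ℕ × ℕ → ℕ) h2; simpa using this
        have hval : m'.1 = ((n.1 - 1, n.2) : ℕ × ℕ) := by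
          apply Prod.ext <;> simp <;> omega
        have hq : ((n.1 - 1, n.2) : ℕ × ℕ) ≠ (0, 0) := hval ▸ m'.2
        have : m' = (⟨(n.1 - 1, n.2), hq⟩ : N2) := Subtype.ext hval
        rw [this]
        exact uext_self hq
  rw [h1, d1_rep' (elem 0 (Sum.inr ⟨n, hn⟩) f) β (scov β) (uext β n) (scov_valid β)
    (fun m hm => uext_sub (mem_u_a10 hm))]
  rw [single_double 0 (Sum.inr ⟨n, hn⟩) ((scov β).disjSum (uext β n)) W1 M1 A1 f β]
  rw [Finset.sum_disjSum]
  simp only [W1, M1, A1, Sum.elim_inl, Sum.elim_inr, dZ, Nat.cast_zero, zero_mul,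
    sub_zero, dKMr, dMr]
  by_cases hv : n = (1, 0)
  · subst hv
    rw [show (⟨(1, 0), hn⟩ : N2) = v10 from Subtype.ext rfl]
    have hKsimp : ∀ x ∈ scov β,
        ((x + 1 : ℕ) : ℝ) * (((if v10 = v10 then 1 else 0 : ℕ) : ℝ) *
            elem (0 + (eM v10 + eK (x + 1)) - Finsupp.single (Sum.inr v10) 1) (Sum.inl x) f β)
          = ((x + 1 : ℕ) : ℝ) * elem (eK (x + 1)) (Sum.inl x) f β := by
      intro x _
      rw [if_pos rfl, midxZKM v10 (eK (x + 1))]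
      norm_num
    have hM0 : ∀ x ∈ uext β (1, 0),
        ((x.1.1 + 1 : ℕ) : ℝ) * (((if a10 x = v10 then 1 else 0 : ℕ) : ℝ) *
            elem (0 + eM (a10 x) - Finsupp.single (Sum.inr v10) 1) (Sum.inr x) f β)
          = 0 := by
      intro x _
      rw [if_neg]
      · norm_num
      · intro hh
        have h2 : x.1 + (1, 0) = (1, 0) := congrArg Subtype.val hh
        have h2a : x.1.1 + 1 = 1 := by
          have := congrArg (Prod.fst : ℕ × ℕ → ℕ) h2; simpa using this
        have h2b : x.1.2 = 0 := by
          have := congrArg (Prod.snd : ℕ × ℕ → ℕ) h2; simpa using this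
        exact x.2 (Prod.ext (by omega) (by omega))
    rw [Finset.sum_congr rfl hKsimp, Finset.sum_eq_zero hM0, add_zero]
    have hR : ((((1, 0) : ℕ × ℕ).1 : ℕ) : ℝ) * Dseries (((1, 0) : ℕ × ℕ).1 - 1, ((1, 0) : ℕ × ℕ).2) f β
        = D0series f β := by
      norm_num [Dseries]
    rw [hR, D0_rep f β (scov β) (scov_valid β)]
  · have hKne : ¬ (v10 = (⟨n, hn⟩ : N2)) := fun h => hv (congrArg Subtype.val h).symm
    have hK0 : ∀ x ∈ scov β,
        ((x + 1 : ℕ) : ℝ) * (((if v10 = (⟨n, hn⟩ : N2) then 1 else 0 : ℕ) : ℝ) *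
            elem (0 + (eM v10 + eK (x + 1)) - Finsupp.single (Sum.inr (⟨n, hn⟩ : N2)) 1)
              (Sum.inl x) f β)
          = 0 := by
      intro x _
      rw [if_neg hKne]
      norm_num
    by_cases h0 : n.1 = 0
    · have hM0 : ∀ x ∈ uext β n,
          ((x.1.1 + 1 : ℕ) : ℝ) * (((if a10 x = (⟨n, hn⟩ : N2) then 1 else 0 : ℕ) : ℝ) *
              elem (0 + eM (a10 x) - Finsupp.single (Sum.inr (⟨n, hn⟩ : N2)) 1) (Sum.inr x) f β)
            = 0 := by
        intro x _
        rw [if_neg]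
        · norm_num
        · intro hh
          have h2 : x.1 + (1, 0) = n := congrArg Subtype.val hh
          have h2a : x.1.1 + 1 = n.1 := by
            have := congrArg (Prod.fst : ℕ × ℕ → ℕ) h2; simpa using this
          omega
      rw [Finset.sum_eq_zero hK0, Finset.sum_eq_zero hM0, h0]
      norm_num
    · have hq : ((n.1 - 1, n.2) : ℕ × ℕ) ≠ (0, 0) := by
        intro hc
        apply hv
        have hc1 : n.1 - 1 = 0 := congrArg (Prod.fst : ℕ × ℕ → ℕ) hc
        have hc2 : n.2 = 0 := congrArg (Prod.snd : ℕ × ℕ → ℕ) hc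
        apply Prod.ext
        · show n.1 = 1; omega
        · show n.2 = 0; omega
      set m₀ : N2 := ⟨(n.1 - 1, n.2), hq⟩ with hm₀def
      have ha10 : a10 m₀ = (⟨n, hn⟩ : N2) := by
        apply Subtype.ext
        show ((n.1 - 1, n.2) : ℕ × ℕ) + (1, 0) = n
        apply Prod.ext
        · show n.1 - 1 + 1 = n.1; omega
        · show n.2 + 0 = n.2; omega
      rw [Finset.sum_eq_zero hK0, zero_add]
      rw [Finset.sum_eq_single_of_mem m₀ (uext_self hq)]
      · rw [if_pos ha10, ha10, midxZM]
        have hDs : Dseries (n.1 - 1, n.2) f = DNseries ⟨(n.1 - 1, n.2), hq⟩ f := dif_neg hq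
        rw [hDs, DN_eq]
        have ew : (m₀.1.1 + 1 : ℕ) = n.1 := by
          show n.1 - 1 + 1 = n.1; omega
        rw [ew]
        norm_num
        exact Or.inl rfl
      · intro x _ hx
        rw [if_neg (fun h => hx (a10_inj (h.trans ha10.symm)))]
        norm_num

end Stmt2Aux
namespace Stmt2Aux

lemma sub_apply' (F G : PS) (β : MIdx) : (F - G) β = F β - G β := by
  have := map_sub (MvPowerSeries.coeff (R := ℝ) β) F G
  simpa [MvPowerSeries.coeff_apply] using this

lemma smul_apply' (c : ℝ) (F : PS) (β : MIdx) : (c • F) β = c * F β := rfl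


lemma partC : ∀ n : ℕ × ℕ, ∀ f : PS,
    Dseries n (d1series f) - d1series (Dseries n f) = (n.1 : ℝ) • Dseries (n.1 - 1, n.2) f := by
  intro n f
  by_cases h : n = (0, 0)
  · subst h
    funext β
    rw [sub_apply', smul_apply']
    rw [show Dseries ((0, 0) : ℕ × ℕ) (d1series f) = D0series (d1series f) from dif_pos rfl,
      show Dseries ((0, 0) : ℕ × ℕ) f = D0series f from dif_pos rfl]
    rw [partC0 f β]
    norm_num
  · funext β
    rw [sub_apply', smul_apply']
    rw [show Dseries n (d1series f) = DNseries ⟨n, h⟩ (d1series f) from dif_neg h,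
      show Dseries n f = DNseries ⟨n, h⟩ f from dif_neg h]
    exact partCn n h f β

lemma partD0 (f : PS) (β : MIdx) :
    D0series (d2series f) β - d2series (D0series f) β = 0 := by
  rw [D0_rep (d2series f) β (scov β) (scov_valid β)]
  have hL : ∀ k ∈ scov β,
      ((k + 1 : ℕ) : ℝ) * elem (eK (k + 1)) (Sum.inl k) (d2series f) β
        = ((k + 1 : ℕ) : ℝ) * (∑ t' ∈ (scov β).disjSum (ucov β),
            W2 t' * elem (eK (k + 1)) (Sum.inl k) (elem (M2 t') (A2 t') f) β) := by
    intro k hk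
    congr 1
    refine elem_sum_rep _ _ _ f β _ W2 M2 A2 ?_
    refine d2_rep' f _ (scov β) (ucov β) ?_ ?_
    · intro j hj
      rcases shift_support hj with h | h
      · exact scov_valid β j h
      · injection h with h'
        exact scov_down hk (by omega)
    · intro m' hm'
      rcases shift_support hm' with h | h
      · exact mem_u_a01 h
      · exact absurd h (by simp)
  rw [Finset.sum_congr rfl hL]
  rw [d2_rep' (D0series f) β (scov β) (ucov β) (scov_valid β) (fun m hm => mem_u_a01 hm)]
  have hR : ∀ t' ∈ (scov β).disjSum (ucov β),
      W2 t' * elem (M2 t') (A2 t') (D0series f) β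
        = W2 t' * (∑ k ∈ scov β, ((k + 1 : ℕ) : ℝ) * elem (M2 t') (A2 t')
            (elem (eK (k + 1)) (Sum.inl k) f) β) := by
    intro t' ht'
    congr 1
    refine elem_sum_rep _ _ _ f β (scov β) (fun k => ((k + 1 : ℕ) : ℝ))
      (fun k => eK (k + 1)) (fun k => Sum.inl k) ?_
    refine D0_rep f _ (scov β) ?_
    intro j hj
    rcases shift_support hj with h | h
    · exact scov_valid β j h
    · rcases t' with k0 | m0
      · simp only [A2, Sum.elim_inl] at h
        injection h with h'
        exact scov_down (Finset.inl_mem_disjSum.mp ht') (by omega)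
      · simp only [A2, Sum.elim_inr] at h
        exact absurd h (by simp)
  rw [Finset.sum_congr rfl hR]
  rw [double_comm (scov β) ((scov β).disjSum (ucov β)) (fun k => ((k + 1 : ℕ) : ℝ))
    (fun k => eK (k + 1)) (fun k => Sum.inl k) W2 M2 A2 f β]
  simp only [Finset.sum_disjSum, W2, M2, A2, Sum.elim_inl, Sum.elim_inr]
  rw [Finset.sum_add_distrib]
  have h2 : (∑ k ∈ scov β, ∑ m' ∈ ucov β, ((k + 1 : ℕ) : ℝ) * ((m'.1.2 + 1 : ℕ) : ℝ) *
      (((eM (a01 m') (Sum.inl k) : ℕ) : ℝ) *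
          elem (eK (k + 1) + eM (a01 m') - Finsupp.single (Sum.inl k) 1) (Sum.inr m') f β
        - ((eK (k + 1) (Sum.inr m') : ℕ) : ℝ) *
          elem (eM (a01 m') + eK (k + 1) - Finsupp.single (Sum.inr m') 1) (Sum.inl k) f β))
      = 0 := by
    refine Finset.sum_eq_zero fun k _ => Finset.sum_eq_zero fun m' _ => ?_
    simp [dMl, dKr]
  rw [h2, add_zero]
  have hT1 : ∀ k ∈ scov β, ∀ k' ∈ scov β,
      ((k + 1 : ℕ) : ℝ) * ((k' + 1 : ℕ) : ℝ) *
        ((((eM v01 + eK (k' + 1)) (Sum.inl k) : ℕ) : ℝ) *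
            elem (eK (k + 1) + (eM v01 + eK (k' + 1)) - Finsupp.single (Sum.inl k) 1)
              (Sum.inl k') f β
          - (((eK (k + 1)) (Sum.inl k') : ℕ) : ℝ) *
            elem ((eM v01 + eK (k' + 1)) + eK (k + 1) - Finsupp.single (Sum.inl k') 1)
              (Sum.inl k) f β)
      = (if k = k' + 1 then
            ((k' + 1 : ℕ) : ℝ) * ((k' + 1 + 1 : ℕ) : ℝ)
              * elem (eM v01 + eK (k' + 1 + 1)) (Sum.inl k') f β else 0)
        - (if k' = k + 1 then
            ((k + 1 : ℕ) : ℝ) * ((k + 1 + 1 : ℕ) : ℝ)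
              * elem (eM v01 + eK (k + 1 + 1)) (Sum.inl k) f β else 0) := by
    intro k _ k' _
    rw [dKMl, dKl]
    rcases eq_or_ne k (k' + 1) with rfl | h1
    · rw [if_pos rfl, if_pos rfl, if_neg (by omega : ¬ (k' + 1) + 1 = k'),
        if_neg (by omega : ¬ k' = (k' + 1) + 1), midxCK' k']
      push_cast
      ring
    · rcases eq_or_ne k' (k + 1) with rfl | h2
      · rw [if_neg (by omega : ¬ (k + 1) + 1 = k), if_neg h1, if_pos rfl, if_pos rfl,
          midxCK2 v01 k]
        push_cast
        ring
      · rw [if_neg (fun hh => h1 hh.symm), if_neg (fun hh => h2 hh.symm),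
          if_neg h1, if_neg h2]
        push_cast
        ring
  rw [Finset.sum_congr rfl (fun k hk => Finset.sum_congr rfl (fun k' hk' => hT1 k hk k' hk'))]
  simp only [Finset.sum_sub_distrib]
  rw [sum_sum_ite_left (scov β) (fun _ k' => ((k' + 1 : ℕ) : ℝ) * ((k' + 1 + 1 : ℕ) : ℝ)
      * elem (eM v01 + eK (k' + 1 + 1)) (Sum.inl k') f β),
    sum_sum_ite_right (scov β) (fun k _ => ((k + 1 : ℕ) : ℝ) * ((k + 1 + 1 : ℕ) : ℝ)
      * elem (eM v01 + eK (k + 1 + 1)) (Sum.inl k) f β)]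
  exact sub_self _

def uext2 (β : MIdx) (n : ℕ × ℕ) : Finset N2 :=
  if h : ((n.1, n.2 - 1) : ℕ × ℕ) ≠ (0, 0) then
    insert (⟨(n.1, n.2 - 1), h⟩ : N2) (ucov β) else ucov β

lemma uext2_sub {β : MIdx} {n : ℕ × ℕ} {m : N2} (h : m ∈ ucov β) : m ∈ uext2 β n := by
  unfold uext2
  split_ifs
  · exact Finset.mem_insert_of_mem h
  · exact h

lemma uext2_self {β : MIdx} {n : ℕ × ℕ} (h : ((n.1, n.2 - 1) : ℕ × ℕ) ≠ (0, 0)) :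
    (⟨(n.1, n.2 - 1), h⟩ : N2) ∈ uext2 β n := by
  unfold uext2
  rw [dif_pos h]
  exact Finset.mem_insert_self _ _

lemma partDn (n : ℕ × ℕ) (hn : n ≠ (0, 0)) (f : PS) (β : MIdx) :
    DNseries ⟨n, hn⟩ (d2series f) β - d2series (DNseries ⟨n, hn⟩ f) β
      = (n.2 : ℝ) * Dseries (n.1, n.2 - 1) f β := by
  rw [DN_eq ⟨n, hn⟩ (d2series f), DN_eq ⟨n, hn⟩ f]
  have h1 : elem 0 (Sum.inr ⟨n, hn⟩) (d2series f) β
      = ∑ t' ∈ (scov β).disjSum (uext2 β n),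
          W2 t' * elem 0 (Sum.inr ⟨n, hn⟩) (elem (M2 t') (A2 t') f) β := by
    refine elem_sum_rep _ _ _ f β _ W2 M2 A2 ?_
    refine d2_rep' f _ (scov β) (uext2 β n) ?_ ?_
    · intro j hj
      rcases shift_support hj with h | h
      · exact scov_valid β j h
      · exact absurd h (by simp)
    · intro m' hm'
      rcases shift_support hm' with h | h
      · exact uext2_sub (mem_u_a01 h)
      · have hmn : a01 m' = (⟨n, hn⟩ : N2) := by
          injection h
        have h2 : m'.1 + (0, 1) = n := congrArg Subtype.val hmn
        have h2a : m'.1.1 = n.1 := by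
          have := congrArg (Prod.fst : ℕ × ℕ → ℕ) h2; simpa using this
        have h2b : m'.1.2 + 1 = n.2 := by
          have := congrArg (Prod.snd : ℕ × ℕ → ℕ) h2; simpa using this
        have hval : m'.1 = ((n.1, n.2 - 1) : ℕ × ℕ) := by
          apply Prod.ext <;> simp <;> omega
        have hq : ((n.1, n.2 - 1) : ℕ × ℕ) ≠ (0, 0) := hval ▸ m'.2
        have : m' = (⟨(n.1, n.2 - 1), hq⟩ : N2) := Subtype.ext hval
        rw [this]
        exact uext2_self hq
  rw [h1, d2_rep' (elem 0 (Sum.inr ⟨n, hn⟩) f) β (scov β) (uext2 β n) (scov_valid β)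
    (fun m hm => uext2_sub (mem_u_a01 hm))]
  rw [single_double 0 (Sum.inr ⟨n, hn⟩) ((scov β).disjSum (uext2 β n)) W2 M2 A2 f β]
  rw [Finset.sum_disjSum]
  simp only [W2, M2, A2, Sum.elim_inl, Sum.elim_inr, dZ, Nat.cast_zero, zero_mul,
    sub_zero, dKMr, dMr]
  by_cases hv : n = (0, 1)
  · subst hv
    rw [show (⟨(0, 1), hn⟩ : N2) = v01 from Subtype.ext rfl]
    have hKsimp : ∀ x ∈ scov β,
        ((x + 1 : ℕ) : ℝ) * (((if v01 = v01 then 1 else 0 : ℕ) : ℝ) *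
            elem (0 + (eM v01 + eK (x + 1)) - Finsupp.single (Sum.inr v01) 1) (Sum.inl x) f β)
          = ((x + 1 : ℕ) : ℝ) * elem (eK (x + 1)) (Sum.inl x) f β := by
      intro x _
      rw [if_pos rfl, midxZKM v01 (eK (x + 1))]
      norm_num
    have hM0 : ∀ x ∈ uext2 β (0, 1),
        ((x.1.2 + 1 : ℕ) : ℝ) * (((if a01 x = v01 then 1 else 0 : ℕ) : ℝ) *
            elem (0 + eM (a01 x) - Finsupp.single (Sum.inr v01) 1) (Sum.inr x) f β)
          = 0 := by
      intro x _
      rw [if_neg]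
      · norm_num
      · intro hh
        have h2 : x.1 + (0, 1) = (0, 1) := congrArg Subtype.val hh
        have h2a : x.1.1 = 0 := by
          have := congrArg (Prod.fst : ℕ × ℕ → ℕ) h2; simpa using this
        have h2b : x.1.2 + 1 = 1 := by
          have := congrArg (Prod.snd : ℕ × ℕ → ℕ) h2; simpa using this
        exact x.2 (Prod.ext (by omega) (by omega))
    rw [Finset.sum_congr rfl hKsimp, Finset.sum_eq_zero hM0, add_zero]
    have hR : ((((0, 1) : ℕ × ℕ).2 : ℕ) : ℝ) * Dseries (((0, 1) : ℕ × ℕ).1, ((0, 1) : ℕ × ℕ).2 - 1) f β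
        = D0series f β := by
      norm_num [Dseries]
    rw [hR, D0_rep f β (scov β) (scov_valid β)]
  · have hKne : ¬ (v01 = (⟨n, hn⟩ : N2)) := fun h => hv (congrArg Subtype.val h).symm
    have hK0 : ∀ x ∈ scov β,
        ((x + 1 : ℕ) : ℝ) * (((if v01 = (⟨n, hn⟩ : N2) then 1 else 0 : ℕ) : ℝ) *
            elem (0 + (eM v01 + eK (x + 1)) - Finsupp.single (Sum.inr (⟨n, hn⟩ : N2)) 1)
              (Sum.inl x) f β)
          = 0 := by
      intro x _
      rw [if_neg hKne]
      norm_num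
    by_cases h0 : n.2 = 0
    · have hM0 : ∀ x ∈ uext2 β n,
          ((x.1.2 + 1 : ℕ) : ℝ) * (((if a01 x = (⟨n, hn⟩ : N2) then 1 else 0 : ℕ) : ℝ) *
              elem (0 + eM (a01 x) - Finsupp.single (Sum.inr (⟨n, hn⟩ : N2)) 1) (Sum.inr x) f β)
            = 0 := by
        intro x _
        rw [if_neg]
        · norm_num
        · intro hh
          have h2 : x.1 + (0, 1) = n := congrArg Subtype.val hh
          have h2b : x.1.2 + 1 = n.2 := by
            have := congrArg (Prod.snd : ℕ × ℕ → ℕ) h2; simpa using this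
          omega
      rw [Finset.sum_eq_zero hK0, Finset.sum_eq_zero hM0, h0]
      norm_num
    · have hq : ((n.1, n.2 - 1) : ℕ × ℕ) ≠ (0, 0) := by
        intro hc
        apply hv
        have hc1 : n.1 = 0 := congrArg (Prod.fst : ℕ × ℕ → ℕ) hc
        have hc2 : n.2 - 1 = 0 := congrArg (Prod.snd : ℕ × ℕ → ℕ) hc
        apply Prod.ext
        · show n.1 = 0; omega
        · show n.2 = 1; omega
      set m₀ : N2 := ⟨(n.1, n.2 - 1), hq⟩ with hm₀def
      have ha01 : a01 m₀ = (⟨n, hn⟩ : N2) := by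
        apply Subtype.ext
        show ((n.1, n.2 - 1) : ℕ × ℕ) + (0, 1) = n
        apply Prod.ext
        · show n.1 + 0 = n.1; omega
        · show n.2 - 1 + 1 = n.2; omega
      rw [Finset.sum_eq_zero hK0, zero_add]
      rw [Finset.sum_eq_single_of_mem m₀ (uext2_self hq)]
      · rw [if_pos ha01, ha01, midxZM]
        have hDs : Dseries (n.1, n.2 - 1) f = DNseries ⟨(n.1, n.2 - 1), hq⟩ f := dif_neg hq
        rw [hDs, DN_eq]
        have ew : (m₀.1.2 + 1 : ℕ) = n.2 := by
          show n.2 - 1 + 1 = n.2; omega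
        rw [ew]
        norm_num
        exact Or.inl rfl
      · intro x _ hx
        rw [if_neg (fun h => hx (a01_inj (h.trans ha01.symm)))]
        norm_num

lemma partD : ∀ n : ℕ × ℕ, ∀ f : PS,
    Dseries n (d2series f) - d2series (Dseries n f) = (n.2 : ℝ) • Dseries (n.1, n.2 - 1) f := by
  intro n f
  by_cases h : n = (0, 0)
  · subst h
    funext β
    rw [sub_apply', smul_apply']
    rw [show Dseries ((0, 0) : ℕ × ℕ) (d2series f) = D0series (d2series f) from dif_pos rfl,
      show Dseries ((0, 0) : ℕ × ℕ) f = D0series f from dif_pos rfl]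
    rw [partD0 f β]
    norm_num
  · funext β
    rw [sub_apply', smul_apply']
    rw [show Dseries n (d2series f) = DNseries ⟨n, h⟩ (d2series f) from dif_neg h,
      show Dseries n f = DNseries ⟨n, h⟩ f from dif_neg h]
    exact partDn n h f β

end Stmt2Aux
namespace Stmt2Aux

lemma partB (f : PS) : d1series (d2series f) = d2series (d1series f) := by
  funext β
  rw [← sub_eq_zero]
  rw [d1_rep' (d2series f) β (scov β) (ucov β) (scov_valid β) (fun m hm => mem_u_a10 hm)]
  have hL : ∀ t ∈ (scov β).disjSum (ucov β),
      W1 t * elem (M1 t) (A1 t) (d2series f) β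
        = W1 t * (∑ t' ∈ (scov β).disjSum (ucov β),
            W2 t' * elem (M1 t) (A1 t) (elem (M2 t') (A2 t') f) β) := by
    intro t ht
    congr 1
    refine elem_sum_rep _ _ _ f β _ W2 M2 A2 ?_
    refine d2_rep' f _ (scov β) (ucov β) ?_ ?_
    · intro j hj
      rcases shift_support hj with h | h
      · exact scov_valid β j h
      · rcases t with k0 | m0
        · simp only [A1, Sum.elim_inl] at h
          injection h with h'
          exact scov_down (Finset.inl_mem_disjSum.mp ht) (by omega)
        · simp only [A1, Sum.elim_inr] at h
          exact absurd h (by simp)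
    · intro m' hm'
      rcases shift_support hm' with h | h
      · exact mem_u_a01 h
      · rcases t with k0 | m0
        · simp only [A1, Sum.elim_inl] at h
          exact absurd h (by simp)
        · simp only [A1, Sum.elim_inr] at h
          have hmm : a01 m' = m0 := by injection h
          refine ucov_down (Finset.inr_mem_disjSum.mp ht) ?_ ?_
          · rw [← hmm]; show m'.1.1 ≤ m'.1.1 + 0; omega
          · rw [← hmm]; show m'.1.2 ≤ m'.1.2 + 1; omega
  rw [Finset.sum_congr rfl hL]
  rw [d2_rep' (d1series f) β (scov β) (ucov β) (scov_valid β) (fun m hm => mem_u_a01 hm)]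
  have hR : ∀ t' ∈ (scov β).disjSum (ucov β),
      W2 t' * elem (M2 t') (A2 t') (d1series f) β
        = W2 t' * (∑ t ∈ (scov β).disjSum (ucov β),
            W1 t * elem (M2 t') (A2 t') (elem (M1 t) (A1 t) f) β) := by
    intro t' ht'
    congr 1
    refine elem_sum_rep _ _ _ f β _ W1 M1 A1 ?_
    refine d1_rep' f _ (scov β) (ucov β) ?_ ?_
    · intro j hj
      rcases shift_support hj with h | h
      · exact scov_valid β j h
      · rcases t' with k0 | m0
        · simp only [A2, Sum.elim_inl] at h
          injection h with h'
          exact scov_down (Finset.inl_mem_disjSum.mp ht') (by omega)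
        · simp only [A2, Sum.elim_inr] at h
          exact absurd h (by simp)
    · intro m' hm'
      rcases shift_support hm' with h | h
      · exact mem_u_a10 h
      · rcases t' with k0 | m0
        · simp only [A2, Sum.elim_inl] at h
          exact absurd h (by simp)
        · simp only [A2, Sum.elim_inr] at h
          have hmm : a10 m' = m0 := by injection h
          refine ucov_down (Finset.inr_mem_disjSum.mp ht') ?_ ?_
          · rw [← hmm]; show m'.1.1 ≤ m'.1.1 + 1; omega
          · rw [← hmm]; show m'.1.2 ≤ m'.1.2 + 0; omega
  rw [Finset.sum_congr rfl hR]
  rw [double_comm ((scov β).disjSum (ucov β)) ((scov β).disjSum (ucov β)) W1 M1 A1 W2 M2 A2 f β]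
  simp only [Finset.sum_disjSum, W1, M1, A1, W2, M2, A2, Sum.elim_inl, Sum.elim_inr]
  rw [Finset.sum_add_distrib, Finset.sum_add_distrib]
  have hKK : (∑ k ∈ scov β, ∑ k' ∈ scov β, ((k + 1 : ℕ) : ℝ) * ((k' + 1 : ℕ) : ℝ) *
      ((((eM v01 + eK (k' + 1)) (Sum.inl k) : ℕ) : ℝ) *
          elem (eM v10 + eK (k + 1) + (eM v01 + eK (k' + 1)) - Finsupp.single (Sum.inl k) 1)
            (Sum.inl k') f β
        - (((eM v10 + eK (k + 1)) (Sum.inl k') : ℕ) : ℝ) *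
          elem (eM v01 + eK (k' + 1) + (eM v10 + eK (k + 1)) - Finsupp.single (Sum.inl k') 1)
            (Sum.inl k) f β)) = 0 := by
    have hT1 : ∀ k ∈ scov β, ∀ k' ∈ scov β,
        ((k + 1 : ℕ) : ℝ) * ((k' + 1 : ℕ) : ℝ) *
          ((((eM v01 + eK (k' + 1)) (Sum.inl k) : ℕ) : ℝ) *
              elem (eM v10 + eK (k + 1) + (eM v01 + eK (k' + 1)) - Finsupp.single (Sum.inl k) 1)
                (Sum.inl k') f β
            - (((eM v10 + eK (k + 1)) (Sum.inl k') : ℕ) : ℝ) *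
              elem (eM v01 + eK (k' + 1) + (eM v10 + eK (k + 1)) - Finsupp.single (Sum.inl k') 1)
                (Sum.inl k) f β)
        = (if k = k' + 1 then ((k' + 1 : ℕ) : ℝ) * ((k' + 1 + 1 : ℕ) : ℝ)
              * elem (eM v10 + (eM v01 + eK (k' + 1 + 1))) (Sum.inl k') f β else 0)
          - (if k' = k + 1 then ((k + 1 : ℕ) : ℝ) * ((k + 1 + 1 : ℕ) : ℝ)
              * elem (eM v10 + (eM v01 + eK (k + 1 + 1))) (Sum.inl k) f β else 0) := by
      intro k _ k' _
      simp only [dKMl]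
      rcases eq_or_ne k (k' + 1) with rfl | h1
      · rw [if_pos rfl, if_pos rfl, if_neg (show ¬ (k' + 1) + 1 = k' by omega),
          if_neg (show ¬ k' = (k' + 1) + 1 by omega), midxB1 k']
        push_cast
        ring
      · rcases eq_or_ne k' (k + 1) with rfl | h2
        · rw [if_neg (show ¬ (k + 1) + 1 = k by omega), if_neg h1, if_pos rfl, if_pos rfl,
            midxB2 k]
          push_cast
          ring
        · rw [if_neg (fun hh => h1 hh.symm), if_neg (fun hh => h2 hh.symm),
            if_neg h1, if_neg h2]
          push_cast
          ring
    rw [Finset.sum_congr rfl (fun k hk => Finset.sum_congr rfl (hT1 k hk))]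
    simp only [Finset.sum_sub_distrib]
    rw [sum_sum_ite_left (scov β) (fun _ k' => ((k' + 1 : ℕ) : ℝ) * ((k' + 1 + 1 : ℕ) : ℝ)
        * elem (eM v10 + (eM v01 + eK (k' + 1 + 1))) (Sum.inl k') f β),
      sum_sum_ite_right (scov β) (fun k _ => ((k + 1 : ℕ) : ℝ) * ((k + 1 + 1 : ℕ) : ℝ)
        * elem (eM v10 + (eM v01 + eK (k + 1 + 1))) (Sum.inl k) f β)]
    exact sub_self _
  have hKM : (∑ k ∈ scov β, ∑ m' ∈ ucov β, ((k + 1 : ℕ) : ℝ) * ((m'.1.2 + 1 : ℕ) : ℝ) *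
      ((((eM (a01 m')) (Sum.inl k) : ℕ) : ℝ) *
          elem (eM v10 + eK (k + 1) + eM (a01 m') - Finsupp.single (Sum.inl k) 1)
            (Sum.inr m') f β
        - (((eM v10 + eK (k + 1)) (Sum.inr m') : ℕ) : ℝ) *
          elem (eM (a01 m') + (eM v10 + eK (k + 1)) - Finsupp.single (Sum.inr m') 1)
            (Sum.inl k) f β))
      = ∑ k ∈ scov β, (if v10 ∈ ucov β then
          -(((k + 1 : ℕ) : ℝ) * elem (eM (a01 v10) + eK (k + 1)) (Sum.inl k) f β) else 0) := by
    have hterm : ∀ k ∈ scov β, ∀ m' ∈ ucov β,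
        ((k + 1 : ℕ) : ℝ) * ((m'.1.2 + 1 : ℕ) : ℝ) *
          ((((eM (a01 m')) (Sum.inl k) : ℕ) : ℝ) *
              elem (eM v10 + eK (k + 1) + eM (a01 m') - Finsupp.single (Sum.inl k) 1)
                (Sum.inr m') f β
            - (((eM v10 + eK (k + 1)) (Sum.inr m') : ℕ) : ℝ) *
              elem (eM (a01 m') + (eM v10 + eK (k + 1)) - Finsupp.single (Sum.inr m') 1)
                (Sum.inl k) f β)
        = (if v10 = m' then
            -(((k + 1 : ℕ) : ℝ) * elem (eM (a01 v10) + eK (k + 1)) (Sum.inl k) f β) else 0) := by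
      intro k _ m' _
      rw [dMl, dKMr]
      rcases eq_or_ne v10 m' with rfl | h1
      · rw [if_pos rfl, if_pos rfl, midxKM (eM (a01 v10)) v10 (eK (k + 1))]
        rw [show (v10.1.2 + 1 : ℕ) = 1 from rfl]
        push_cast
        ring
      · rw [if_neg h1, if_neg h1]
        push_cast
        ring
    rw [Finset.sum_congr rfl (fun k hk => Finset.sum_congr rfl (hterm k hk))]
    exact Finset.sum_congr rfl fun k _ => Finset.sum_ite_eq (ucov β) v10
      (fun _ => -(((k + 1 : ℕ) : ℝ) * elem (eM (a01 v10) + eK (k + 1)) (Sum.inl k) f β))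
  have hMK : (∑ m ∈ ucov β, ∑ k' ∈ scov β, ((m.1.1 + 1 : ℕ) : ℝ) * ((k' + 1 : ℕ) : ℝ) *
      ((((eM v01 + eK (k' + 1)) (Sum.inr m) : ℕ) : ℝ) *
          elem (eM (a10 m) + (eM v01 + eK (k' + 1)) - Finsupp.single (Sum.inr m) 1)
            (Sum.inl k') f β
        - (((eM (a10 m)) (Sum.inl k') : ℕ) : ℝ) *
          elem (eM v01 + eK (k' + 1) + eM (a10 m) - Finsupp.single (Sum.inl k') 1)
            (Sum.inr m) f β))
      = ∑ k ∈ scov β, (if v01 ∈ ucov β then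
          ((k + 1 : ℕ) : ℝ) * elem (eM (a01 v10) + eK (k + 1)) (Sum.inl k) f β else 0) := by
    have hterm : ∀ m ∈ ucov β, ∀ k' ∈ scov β,
        ((m.1.1 + 1 : ℕ) : ℝ) * ((k' + 1 : ℕ) : ℝ) *
          ((((eM v01 + eK (k' + 1)) (Sum.inr m) : ℕ) : ℝ) *
              elem (eM (a10 m) + (eM v01 + eK (k' + 1)) - Finsupp.single (Sum.inr m) 1)
                (Sum.inl k') f β
            - (((eM (a10 m)) (Sum.inl k') : ℕ) : ℝ) *
              elem (eM v01 + eK (k' + 1) + eM (a10 m) - Finsupp.single (Sum.inl k') 1)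
                (Sum.inr m) f β)
        = (if v01 = m then
            ((k' + 1 : ℕ) : ℝ) * elem (eM (a01 v10) + eK (k' + 1)) (Sum.inl k') f β else 0) := by
      intro m _ k' _
      rw [dMl, dKMr]
      rcases eq_or_ne v01 m with rfl | h1
      · rw [if_pos rfl, if_pos rfl, midxKM (eM (a10 v01)) v01 (eK (k' + 1)), a10v01]
        rw [show (v01.1.1 + 1 : ℕ) = 1 from rfl]
        push_cast
        ring
      · rw [if_neg h1, if_neg h1]
        push_cast
        ring
    rw [Finset.sum_congr rfl (fun m hm => Finset.sum_congr rfl (hterm m hm))]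
    have step1 : ∀ m ∈ ucov β,
        (∑ k' ∈ scov β, (if v01 = m then
            ((k' + 1 : ℕ) : ℝ) * elem (eM (a01 v10) + eK (k' + 1)) (Sum.inl k') f β else 0))
          = if v01 = m then (∑ k' ∈ scov β,
              ((k' + 1 : ℕ) : ℝ) * elem (eM (a01 v10) + eK (k' + 1)) (Sum.inl k') f β) else 0 := by
      intro m _
      by_cases h : v01 = m <;> simp [h]
    rw [Finset.sum_congr rfl step1, Finset.sum_ite_eq (ucov β) v01
      (fun _ => ∑ k' ∈ scov β, ((k' + 1 : ℕ) : ℝ)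
        * elem (eM (a01 v10) + eK (k' + 1)) (Sum.inl k') f β)]
    by_cases hu : v01 ∈ ucov β <;> simp [hu]
  have hMM : (∑ m ∈ ucov β, ∑ m' ∈ ucov β, ((m.1.1 + 1 : ℕ) : ℝ) * ((m'.1.2 + 1 : ℕ) : ℝ) *
      ((((eM (a01 m')) (Sum.inr m) : ℕ) : ℝ) *
          elem (eM (a10 m) + eM (a01 m') - Finsupp.single (Sum.inr m) 1) (Sum.inr m') f β
        - (((eM (a10 m)) (Sum.inr m') : ℕ) : ℝ) *
          elem (eM (a01 m') + eM (a10 m) - Finsupp.single (Sum.inr m') 1) (Sum.inr m) f β))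
      = 0 := by
    have hterm : ∀ m ∈ ucov β, ∀ m' ∈ ucov β,
        ((m.1.1 + 1 : ℕ) : ℝ) * ((m'.1.2 + 1 : ℕ) : ℝ) *
          ((((eM (a01 m')) (Sum.inr m) : ℕ) : ℝ) *
              elem (eM (a10 m) + eM (a01 m') - Finsupp.single (Sum.inr m) 1) (Sum.inr m') f β
            - (((eM (a10 m)) (Sum.inr m') : ℕ) : ℝ) *
              elem (eM (a01 m') + eM (a10 m) - Finsupp.single (Sum.inr m') 1) (Sum.inr m) f β)
        = (if a01 m' = m then ((m'.1.1 + 1 : ℕ) : ℝ) * ((m'.1.2 + 1 : ℕ) : ℝ)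
              * elem (eM (a10 (a01 m'))) (Sum.inr m') f β else 0)
          - (if a10 m = m' then ((m.1.1 + 1 : ℕ) : ℝ) * ((m.1.2 + 1 : ℕ) : ℝ)
              * elem (eM (a01 (a10 m))) (Sum.inr m) f β else 0) := by
      intro m _ m' _
      rw [dMr, dMr]
      rcases eq_or_ne (a01 m') m with rfl | h1
      · have hne : ¬ a10 (a01 m') = m' := by
          intro hh
          have h2 := congrArg (fun z : N2 => z.1.2) hh
          simp only [a10, a01, Prod.snd_add] at h2
          omega
        rw [if_pos rfl, if_pos rfl, if_neg hne, if_neg hne,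
          midxM (eM (a10 (a01 m'))) (a01 m')]
        rw [show ((a01 m').1.1 + 1 : ℕ) = m'.1.1 + 1 from rfl]
        push_cast
        ring
      · rw [if_neg h1, if_neg h1]
        rcases eq_or_ne (a10 m) m' with rfl | h2
        · rw [if_pos rfl, if_pos rfl, midxM (eM (a01 (a10 m))) (a10 m)]
          rw [show ((a10 m).1.2 + 1 : ℕ) = m.1.2 + 1 from rfl]
          push_cast
          ring
        · rw [if_neg h2, if_neg h2]
          push_cast
          ring
    rw [Finset.sum_congr rfl (fun m hm => Finset.sum_congr rfl (hterm m hm))]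
    simp only [Finset.sum_sub_distrib]
    rw [Finset.sum_comm (s := ucov β) (t := ucov β)
      (f := fun m m' => (if a01 m' = m then ((m'.1.1 + 1 : ℕ) : ℝ) * ((m'.1.2 + 1 : ℕ) : ℝ)
        * elem (eM (a10 (a01 m'))) (Sum.inr m') f β else 0))]
    rw [Finset.sum_congr rfl (fun m' (_ : m' ∈ ucov β) => Finset.sum_ite_eq (ucov β) (a01 m')
      (fun _ => ((m'.1.1 + 1 : ℕ) : ℝ) * ((m'.1.2 + 1 : ℕ) : ℝ)
        * elem (eM (a10 (a01 m'))) (Sum.inr m') f β))]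
    rw [Finset.sum_congr rfl (fun m (_ : m ∈ ucov β) => Finset.sum_ite_eq (ucov β) (a10 m)
      (fun _ => ((m.1.1 + 1 : ℕ) : ℝ) * ((m.1.2 + 1 : ℕ) : ℝ)
        * elem (eM (a01 (a10 m))) (Sum.inr m) f β))]
    rw [sub_eq_zero]
    refine Finset.sum_congr rfl fun j _ => ?_
    rw [acomm j]
    by_cases hz : eM (a01 (a10 j)) ≤ β
    · have hsupp : (Sum.inr (a01 (a10 j)) : Idx) ∈ β.support := by
        have h1 := Finsupp.le_def.mp hz (Sum.inr (a01 (a10 j)))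
        rw [Finsupp.mem_support_iff]
        simp [eM, Finsupp.single_apply] at h1
        omega
      have h1u : a01 j ∈ ucov β := ucov_mem hsupp
        (by show j.1.1 + 0 ≤ j.1.1 + 1 + 0; omega)
        (by show j.1.2 + 1 ≤ j.1.2 + 0 + 1; omega)
      have h2u : a10 j ∈ ucov β := ucov_mem hsupp
        (by show j.1.1 + 1 ≤ j.1.1 + 1 + 0; omega)
        (by show j.1.2 + 0 ≤ j.1.2 + 0 + 1; omega)
      rw [if_pos h1u, if_pos h2u]
    · rw [elem_zero hz]
      simp
  rw [hKK, hKM, hMK, hMM, zero_add, add_zero, ← Finset.sum_add_distrib]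
  refine Finset.sum_eq_zero fun k _ => ?_
  by_cases hz : eM (a01 v10) + eK (k + 1) ≤ β
  · have hsupp : (Sum.inr (a01 v10) : Idx) ∈ β.support := by
      have h1 := Finsupp.le_def.mp hz (Sum.inr (a01 v10))
      rw [Finsupp.mem_support_iff]
      simp [eM, eK, Finsupp.add_apply, Finsupp.single_apply] at h1
      omega
    have h10 : v10 ∈ ucov β := ucov_mem hsupp
      (by show (1 : ℕ) ≤ 1 + 0; omega) (by show (0 : ℕ) ≤ 0 + 1; omega)
    have h01 : v01 ∈ ucov β := ucov_mem hsupp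
      (by show (0 : ℕ) ≤ 1 + 0; omega) (by show (1 : ℕ) ≤ 0 + 1; omega)
    rw [if_pos h10, if_pos h01]
    ring
  · rw [elem_zero hz]
    simp

end Stmt2Aux
/-- **Commutators of the infinitesimal generators of shift and constant tilt.** -/
theorem stmt2 :
    (∀ n n' : ℕ × ℕ, ∀ f : PS, Dseries n (Dseries n' f) = Dseries n' (Dseries n f)) ∧
    (∀ f : PS, d1series (d2series f) = d2series (d1series f)) ∧
    (∀ n : ℕ × ℕ, ∀ f : PS,
        Dseries n (d1series f) - d1series (Dseries n f)
          = (n.1 : ℝ) • Dseries (n.1 - 1, n.2) f) ∧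
    (∀ n : ℕ × ℕ, ∀ f : PS,
        Dseries n (d2series f) - d2series (Dseries n f)
          = (n.2 : ℝ) • Dseries (n.1, n.2 - 1) f) :=
  ⟨Stmt2Aux.partA, Stmt2Aux.partB, Stmt2Aux.partC, Stmt2Aux.partD⟩
end

section
/- Invariance of the dual model space. Let T̃* ⊂ ℝ[[z_k,z_𝐧]] be the set of power series whose z^γ-coefficient vanishes unless [γ] ≥ 0, and let T* ⊂ ℝ[[z_k,z_𝐧]] be the set of power series whose z^γ-coefficient vanishes unless [γ] ≥ 0 or γ = e_𝐧 for some 𝐧 ≠ 0. Then every operator D in the family {z^γ·D^(𝐧) : [γ] ≥ 0, 𝐧 ∈ ℕ²} ∪ {∂₁, ∂₂} satisfies D(T̃*) ⊆ T̃* and D(T*) ⊆ T*. -/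
open MvPolynomial

section Aux
open Finsupp

lemma brk_add (a b : MIdx) : brk (a + b) = brk a + brk b := by
  unfold brk
  apply Finsupp.sum_add_index' <;> intro i <;> rcases i with k | m <;> intros <;> simp <;> ring

lemma brk_single_inl (k n : ℕ) : brk (Finsupp.single (Sum.inl k : Idx) n) = (k : ℤ) * n := by
  unfold brk
  rw [Finsupp.sum_single_index]
  simp

lemma brk_single_inr (m : N2) (n : ℕ) : brk (Finsupp.single (Sum.inr m : Idx) n) = -(n : ℤ) := by
  unfold brk
  rw [Finsupp.sum_single_index]
  simp

lemma brk_sub_single {i : Idx} {β : MIdx} (h : Finsupp.single i 1 ≤ β) :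
    brk β = brk (β - Finsupp.single i 1) + brk (Finsupp.single i 1) := by
  conv_lhs => rw [← tsub_add_cancel_of_le h]
  rw [brk_add]

end Aux

section Core
open Finsupp

def CondE (E : Prop) (f : PS) : Prop :=
  ∀ δ : MIdx, MvPowerSeries.coeff (R := ℝ) δ f ≠ 0 →
    0 ≤ brk δ ∨ (E ∧ ∃ m : N2, δ = Finsupp.single (Sum.inr m) 1)

lemma not_single_of_inl {δ : MIdx} {k : ℕ} (h : 1 ≤ δ (Sum.inl k)) :
    ¬ ∃ m : N2, δ = Finsupp.single (Sum.inr m) 1 := by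
  rintro ⟨m, rfl⟩
  simp [Finsupp.single_apply] at h

lemma D0_aux {E : Prop} {f : PS} (hf : CondE E f) {β : MIdx} (h : D0coeff f β ≠ 0) :
    1 ≤ brk β := by
  obtain ⟨i, hi, hgi⟩ := Finset.exists_ne_zero_of_sum_ne_zero h
  rcases i with k | m
  · rcases k with _ | k
    · exact absurd rfl hgi
    · have hc : MvPowerSeries.coeff (R := ℝ)
          (β + Finsupp.single (Sum.inl k) 1 - Finsupp.single (Sum.inl (k + 1)) 1) f ≠ 0 :=
        right_ne_zero_of_mul hgi
      have hle : Finsupp.single (Sum.inl (k + 1) : Idx) 1 ≤ β :=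
        Finsupp.single_le_iff.mpr (Nat.one_le_iff_ne_zero.mpr (Finsupp.mem_support_iff.mp hi))
      have hδ : β + Finsupp.single (Sum.inl k) 1 - Finsupp.single (Sum.inl (k + 1)) 1
          = (β - Finsupp.single (Sum.inl (k + 1)) 1) + Finsupp.single (Sum.inl k) 1 :=
        (tsub_add_eq_add_tsub hle).symm
      rw [hδ] at hc
      have h1 : 1 ≤ ((β - Finsupp.single (Sum.inl (k + 1) : Idx) 1) +
          Finsupp.single (Sum.inl k : Idx) 1 : MIdx) (Sum.inl k) := by
        simp [Finsupp.add_apply]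
      rcases hf _ hc with hb | ⟨_, hs⟩
      · rw [brk_add, brk_single_inl] at hb
        rw [brk_sub_single hle, brk_single_inl]
        push_cast at hb ⊢
        linarith
      · exact absurd hs (not_single_of_inl h1)
  · exact absurd rfl hgi

lemma DN_aux {E : Prop} {f : PS} (hf : CondE E f) {m : N2} {β : MIdx}
    (h : DNseries m f β ≠ 0) : 1 ≤ brk β ∨ (E ∧ β = 0) := by
  have hc : MvPowerSeries.coeff (R := ℝ) (β + Finsupp.single (Sum.inr m) 1) f ≠ 0 :=
    right_ne_zero_of_mul h
  rcases hf _ hc with hb | ⟨hE, m', hs⟩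
  · left
    rw [brk_add, brk_single_inr] at hb
    omega
  · right
    refine ⟨hE, ?_⟩
    have hle : Finsupp.single (Sum.inr m : Idx) 1 ≤ Finsupp.single (Sum.inr m' : Idx) 1 := by
      rw [← hs]; exact le_add_self
    have hmm : (Sum.inr m' : Idx) = Sum.inr m := by
      have := Finsupp.single_le_iff.mp hle
      by_contra hne
      rw [Finsupp.single_apply, if_neg hne] at this
      omega
    rw [hmm] at hs
    exact add_right_cancel (hs.trans (zero_add _).symm)

end Core

section Main
open Finsupp

lemma eq_of_single_le_single' {i j : Idx} (h : (Finsupp.single i 1 : MIdx) ≤ Finsupp.single j 1) :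
    j = i := by
  have := Finsupp.single_le_iff.mp h
  by_contra hne
  rw [Finsupp.single_apply, if_neg hne] at this
  omega

lemma opOf_aux {f : PS} (hf : CondE True f) {γ : MIdx} (hγ : 0 ≤ brk γ) (n : ℕ × ℕ) {β : MIdx}
    (h : MvPowerSeries.coeff (R := ℝ) β (opOf γ n f) ≠ 0) : 0 ≤ brk β := by
  rw [opOf, MvPowerSeries.coeff_monomial_mul] at h
  split_ifs at h with hle
  · rw [one_mul, MvPowerSeries.coeff_apply] at h
    have hb : brk β = brk γ + brk (β - γ) := by
      conv_lhs => rw [← tsub_add_cancel_of_le hle]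
      rw [brk_add]; ring
    rw [Dseries] at h
    split_ifs at h with h0
    · have := D0_aux hf (h : D0coeff f (β - γ) ≠ 0)
      linarith
    · rcases DN_aux hf (h : DNseries _ f (β - γ) ≠ 0) with h1 | ⟨_, h2⟩
      · linarith
      · have : β = γ := le_antisymm (tsub_eq_zero_iff_le.mp h2) hle
        rw [this]; exact hγ
  · exact absurd rfl h

lemma d1_aux {E : Prop} {f : PS} (hf : CondE E f) {β : MIdx} (h : d1coeff f β ≠ 0) :
    0 ≤ brk β ∨ (E ∧ ∃ p : N2, β = Finsupp.single (Sum.inr p) 1) := by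
  rw [d1coeff] at h
  by_cases hA : (if 1 ≤ β (Sum.inr v10) then
      D0coeff f (β - Finsupp.single (Sum.inr v10) 1) else 0) = 0
  · rw [hA, zero_add] at h
    obtain ⟨i, hi, hterm⟩ := Finset.exists_ne_zero_of_sum_ne_zero h
    rcases i with k | p
    · exact absurd rfl hterm
    · dsimp only at hterm
      by_cases hp : ((p.1.1 - 1, p.1.2) : ℕ × ℕ) ≠ (0, 0) ∧ 1 ≤ p.1.1
      · rw [dif_pos hp] at hterm
        have hc := right_ne_zero_of_mul hterm
        have hlep : Finsupp.single (Sum.inr p : Idx) 1 ≤ β :=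
          Finsupp.single_le_iff.mpr (Nat.one_le_iff_ne_zero.mpr (Finsupp.mem_support_iff.mp hi))
        rcases hf _ hc with hb | ⟨hE, m, hs⟩
        · left
          rw [brk_add, brk_single_inr] at hb
          rw [brk_sub_single hlep, brk_single_inr]
          omega
        · refine Or.inr ⟨hE, p, ?_⟩
          have hq : (Finsupp.single (Sum.inr ⟨(p.1.1 - 1, p.1.2), hp.1⟩ : Idx) 1 : MIdx) ≤
              Finsupp.single (Sum.inr m) 1 := hs ▸ le_add_self
          have hm := eq_of_single_le_single' hq
          rw [hm] at hs
          have h0 : β - Finsupp.single (Sum.inr p) 1 = 0 :=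
            add_right_cancel (hs.trans (zero_add _).symm)
          exact le_antisymm (tsub_eq_zero_iff_le.mp h0) hlep
      · rw [dif_neg hp] at hterm
        exact absurd rfl hterm
  · by_cases hv : 1 ≤ β (Sum.inr v10)
    · rw [if_pos hv] at hA
      have hle : Finsupp.single (Sum.inr v10 : Idx) 1 ≤ β := Finsupp.single_le_iff.mpr hv
      have := D0_aux hf hA
      left
      rw [brk_sub_single hle, brk_single_inr]
      omega
    · rw [if_neg hv] at hA
      exact absurd rfl hA

lemma d2_aux {E : Prop} {f : PS} (hf : CondE E f) {β : MIdx} (h : d2coeff f β ≠ 0) :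
    0 ≤ brk β ∨ (E ∧ ∃ p : N2, β = Finsupp.single (Sum.inr p) 1) := by
  rw [d2coeff] at h
  by_cases hA : (if 1 ≤ β (Sum.inr v01) then
      D0coeff f (β - Finsupp.single (Sum.inr v01) 1) else 0) = 0
  · rw [hA, zero_add] at h
    obtain ⟨i, hi, hterm⟩ := Finset.exists_ne_zero_of_sum_ne_zero h
    rcases i with k | p
    · exact absurd rfl hterm
    · dsimp only at hterm
      by_cases hp : ((p.1.1, p.1.2 - 1) : ℕ × ℕ) ≠ (0, 0) ∧ 1 ≤ p.1.2
      · rw [dif_pos hp] at hterm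
        have hc := right_ne_zero_of_mul hterm
        have hlep : Finsupp.single (Sum.inr p : Idx) 1 ≤ β :=
          Finsupp.single_le_iff.mpr (Nat.one_le_iff_ne_zero.mpr (Finsupp.mem_support_iff.mp hi))
        rcases hf _ hc with hb | ⟨hE, m, hs⟩
        · left
          rw [brk_add, brk_single_inr] at hb
          rw [brk_sub_single hlep, brk_single_inr]
          omega
        · refine Or.inr ⟨hE, p, ?_⟩
          have hq : (Finsupp.single (Sum.inr ⟨(p.1.1, p.1.2 - 1), hp.1⟩ : Idx) 1 : MIdx) ≤
              Finsupp.single (Sum.inr m) 1 := hs ▸ le_add_self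
          have hm := eq_of_single_le_single' hq
          rw [hm] at hs
          have h0 : β - Finsupp.single (Sum.inr p) 1 = 0 :=
            add_right_cancel (hs.trans (zero_add _).symm)
          exact le_antisymm (tsub_eq_zero_iff_le.mp h0) hlep
      · rw [dif_neg hp] at hterm
        exact absurd rfl hterm
  · by_cases hv : 1 ≤ β (Sum.inr v01)
    · rw [if_pos hv] at hA
      have hle : Finsupp.single (Sum.inr v01 : Idx) 1 ≤ β := Finsupp.single_le_iff.mpr hv
      have := D0_aux hf hA
      left
      rw [brk_sub_single hle, brk_single_inr]
      omega
    · rw [if_neg hv] at hA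
      exact absurd rfl hA

end Main

/-- **Invariance of the dual model space** under the generators. -/
theorem stmt7 :
    (∀ (γ : MIdx) (n : ℕ × ℕ), 0 ≤ brk γ →
        Set.MapsTo (opOf γ n) Ttilde Ttilde ∧ Set.MapsTo (opOf γ n) Tstar Tstar) ∧
    (Set.MapsTo d1series Ttilde Ttilde ∧ Set.MapsTo d1series Tstar Tstar) ∧
    (Set.MapsTo d2series Ttilde Ttilde ∧ Set.MapsTo d2series Tstar Tstar) := by
  have hTt : ∀ f ∈ Ttilde, ∀ E : Prop, CondE E f := fun f hf E δ hδ => Or.inl (hf δ hδ)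
  have hTs : ∀ f ∈ Tstar, CondE True f := fun f hf δ hδ =>
    (hf δ hδ).imp id fun hh => ⟨trivial, hh⟩
  refine ⟨fun γ n hγ => ⟨?_, ?_⟩, ⟨?_, ?_⟩, ?_, ?_⟩
  · exact fun f hf β hβ => opOf_aux (hTt f hf True) hγ n hβ
  · exact fun f hf β hβ => Or.inl (opOf_aux (hTs f hf) hγ n hβ)
  · intro f hf β hβ
    rw [MvPowerSeries.coeff_apply] at hβ
    rcases d1_aux (hTt f hf False) hβ with hb | ⟨hE, _⟩
    · exact hb
    · exact hE.elim
  · intro f hf β hβ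
    rw [MvPowerSeries.coeff_apply] at hβ
    rcases d1_aux (hTs f hf) hβ with hb | ⟨_, p, hp⟩
    · exact Or.inl hb
    · exact Or.inr ⟨p, hp⟩
  · intro f hf β hβ
    rw [MvPowerSeries.coeff_apply] at hβ
    rcases d2_aux (hTt f hf False) hβ with hb | ⟨hE, _⟩
    · exact hb
    · exact hE.elim
  · intro f hf β hβ
    rw [MvPowerSeries.coeff_apply] at hβ
    rcases d2_aux (hTs f hf) hβ with hb | ⟨_, p, hp⟩
    · exact Or.inl hb
    · exact Or.inr ⟨p, hp⟩
end

section
/- Composition rule for the structure group in its dual realization (Proposition exp01, parts iii and vi). Suppose Γ realizes the family (π^(𝐧))_{𝐧∈ℕ²} and Γ′ realizes the family (π′^(𝐧))_{𝐧∈ℕ²}. Then the composition Γ∘Γ′ realizes the family (π̄^(𝐧))_{𝐧∈ℕ²} given by π̄^(𝐧) := π^(𝐧) + Γ(π′^(𝐧)). -/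
open MvPolynomial

section Aux

lemma aux_mulLeftCont (g : PS) : Continuous (fun f : PS => g * f) := by
  classical
  refine continuous_pi_iff.mpr ?_
  intro γ
  have h : (fun f : PS => (g * f) γ) =
      fun f : PS => ∑ p ∈ Finset.HasAntidiagonal.antidiagonal γ, MvPowerSeries.coeff (R := ℝ) p.1 g * f p.2 := by
    funext f; exact MvPowerSeries.coeff_mul γ g f
  rw [h]
  exact continuous_finset_sum _ fun p _ => (continuous_const.mul (continuous_apply p.2))

lemma aux_coeff_mul_X_eq_zero (g : PS) (i : Idx) (γ : MIdx) (h : γ i = 0) :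
    MvPowerSeries.coeff (R := ℝ) γ (g * MvPowerSeries.X i) = 0 := by
  classical
  rw [MvPowerSeries.coeff_mul]
  refine Finset.sum_eq_zero fun p hp => ?_
  rw [Finset.HasAntidiagonal.mem_antidiagonal] at hp
  rw [MvPowerSeries.coeff_X]
  split_ifs with h'
  · exfalso
    have : γ i = p.1 i + 1 := by
      rw [← hp, h']; simp
    omega
  · simp

/-- The reindexing equivalence `(Σ m, Fin (m+1)) ≃ ℕ × ℕ`, `⟨m, l⟩ ↦ (l, m - l)`. -/
def auxEquiv : (Σ m : ℕ, Fin (m + 1)) ≃ ℕ × ℕ where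
  toFun x := (x.2.1, x.1 - x.2.1)
  invFun p := ⟨p.1 + p.2, ⟨p.1, by omega⟩⟩
  left_inv := by
    rintro ⟨m, ⟨l, hl⟩⟩
    have h : l + (m - l) = m := by omega
    refine Sigma.ext (by simpa using h) ?_
    exact (Fin.heq_ext_iff (by simpa using h)).2 rfl
  right_inv := by rintro ⟨l, j⟩; simp

lemma aux_cast_mul_eq_smul (n : ℕ) (x : PS) : x * (n : PS) = (n : ℝ) • x := by
  rw [Nat.cast_smul_eq_nsmul, nsmul_eq_mul, mul_comm]

end Aux

/-- **Composition rule for the structure group in its dual realization.** -/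
theorem stmt9 (Γ Γ' : PS →ₐ[ℝ] PS) (π π' : ℕ × ℕ → PS)
    (hΓ : Realizes Γ π) (hΓ' : Realizes Γ' π') :
    Realizes (Γ.comp Γ') (fun n => π n + Γ (π' n)) := by
  classical
  obtain ⟨hc, hX, hk⟩ := hΓ
  obtain ⟨hc', hX', hk'⟩ := hΓ'
  haveI : T3Space PS := inferInstanceAs (T3Space ((Idx →₀ ℕ) → ℝ))
  haveI : T2Space PS := inferInstanceAs (T2Space ((Idx →₀ ℕ) → ℝ))
  haveI : ContinuousAdd PS := inferInstanceAs (ContinuousAdd ((Idx →₀ ℕ) → ℝ))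
  haveI : ContinuousConstSMul ℝ PS :=
    inferInstanceAs (ContinuousConstSMul ℝ ((Idx →₀ ℕ) → ℝ))
  refine ⟨hc.comp hc', ?_, ?_⟩
  · intro m
    simp only [AlgHom.comp_apply, hX' m, map_add, hX m]
    rw [add_assoc]
  · intro k
    set a := π (0, 0) with ha
    set b := Γ (π' (0, 0)) with hb
    set S := (Γ.comp Γ') (MvPowerSeries.X (Sum.inl k)) with hS
    -- the doubly-indexed family
    set F : ℕ × ℕ → PS := fun p =>
      (((k + p.1).choose k : ℝ) * ((k + p.1 + p.2).choose (k + p.1) : ℝ)) •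
        (b ^ p.1 * (a ^ p.2 * MvPowerSeries.X (Sum.inl (k + p.1 + p.2)))) with hF
    -- Step 1: apply Γ to the realization of Γ'
    have h1 : HasSum
        (fun l : ℕ => ((k + l).choose k : ℝ) • (b ^ l * Γ (MvPowerSeries.X (Sum.inl (k + l)))))
        S := by
      have h := (hk' k).map Γ hc
      simpa only [map_smul, map_mul, map_pow, Function.comp_def, AlgHom.comp_apply, ← hb, hS] using h
    -- Step 2: fibers of F over the first coordinate
    have h2 : ∀ l : ℕ, HasSum (fun j : ℕ => F (l, j))
        (((k + l).choose k : ℝ) • (b ^ l * Γ (MvPowerSeries.X (Sum.inl (k + l))))) := by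
      intro l
      have h := ((hk (k + l)).map (AddMonoidHom.mulLeft (b ^ l))
        (aux_mulLeftCont (b ^ l))).const_smul (((k + l).choose k : ℝ))
      refine h.congr_fun fun j => ?_
      simp only [hF, Function.comp_def, AddMonoidHom.coe_mulLeft, mul_smul_comm, smul_smul]
    -- Step 3: F is summable (coefficientwise finitely supported)
    have hFsummable : Summable F := by
      refine Pi.summable.mpr ?_
      intro γ
      set N : ℕ := γ.support.sup fun i =>
        match i with
        | Sum.inl n => n + 1
        | Sum.inr _ => 0 with hN
      apply summable_of_ne_finset_zero (s := Finset.range N ×ˢ Finset.range N)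
      intro p hp
      have hout : γ (Sum.inl (k + p.1 + p.2)) = 0 := by
        by_contra hne
        have hmem : Sum.inl (k + p.1 + p.2) ∈ γ.support := Finsupp.mem_support_iff.mpr hne
        have hle : k + p.1 + p.2 + 1 ≤ N := Finset.le_sup (f := fun i =>
          match i with
          | Sum.inl n => n + 1
          | Sum.inr _ => 0) hmem
        simp only [Finset.mem_product, Finset.mem_range] at hp
        omega
      show F p γ = 0
      have : F p γ = MvPowerSeries.coeff (R := ℝ) γ (F p) := rfl
      rw [this, hF]
      simp only [map_smul, smul_eq_mul]
      rw [← mul_assoc (b ^ p.1), aux_coeff_mul_X_eq_zero _ _ _ hout, mul_zero]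
    -- Step 4: F has sum S
    obtain ⟨A, hA⟩ := hFsummable
    have hFS : HasSum F S := by
      have hg := hA.prod_fiberwise h2
      rwa [← h1.unique hg] at hA
    -- Step 5: reindex along antidiagonals and sum each fiber
    have he : HasSum (F ∘ auxEquiv) S := (auxEquiv.hasSum_iff).2 hFS
    have key : ∀ m : ℕ, HasSum (fun l : Fin (m + 1) => (F ∘ auxEquiv) ⟨m, l⟩)
        (((k + m).choose k : ℝ) • ((a + b) ^ m * MvPowerSeries.X (Sum.inl (k + m)))) := by
      intro m
      have hsum := hasSum_fintype (fun l : Fin (m + 1) => (F ∘ auxEquiv) ⟨m, l⟩)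
      have heq0 : ∑ l : Fin (m + 1), (F ∘ auxEquiv) ⟨m, l⟩
          = ∑ l ∈ Finset.range (m + 1), F (l, m - l) := by
        rw [← Fin.sum_univ_eq_sum_range (fun l => F (l, m - l))]
        rfl
      have heq : ∑ l ∈ Finset.range (m + 1), F (l, m - l)
          = ((k + m).choose k : ℝ) • ((a + b) ^ m * MvPowerSeries.X (Sum.inl (k + m))) := by
        rw [add_comm a b, add_pow, Finset.sum_mul, Finset.smul_sum]
        refine Finset.sum_congr rfl fun l hl => ?_
        have hlm : l ≤ m := Nat.lt_succ_iff.mp (Finset.mem_range.mp hl)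
        have hch : (k + l).choose k * (k + m).choose (k + l)
            = (k + m).choose k * m.choose l := by
          have h := Nat.choose_mul (n := k + m) (k := k + l) (s := k)
            (by omega)
          simp only [Nat.add_sub_cancel_left] at h
          rw [mul_comm]; exact h
        have hd : k + l + (m - l) = k + m := by omega
        have hterm : b ^ l * a ^ (m - l) * ((m.choose l : ℕ) : PS) *
              MvPowerSeries.X (Sum.inl (k + m))
            = ((m.choose l : ℕ) : ℝ) •
              (b ^ l * (a ^ (m - l) * MvPowerSeries.X (Sum.inl (k + m)))) := by
          rw [aux_cast_mul_eq_smul, smul_mul_assoc, mul_assoc]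
        simp only [hF]
        rw [hd, hterm, smul_smul, ← Nat.cast_mul, ← Nat.cast_mul, hch]
      rw [heq0, heq] at hsum
      exact hsum
    exact he.sigma key
end

section
/- Realizing endomorphisms preserve the dual model space (part of Theorem 1(i)). Let T̃* ⊂ R be the set of power series whose z^γ-coefficient vanishes unless [γ] ≥ 0, and T* ⊂ R the set of power series whose z^γ-coefficient vanishes unless [γ] ≥ 0 or γ = e_𝐧 for some 𝐧 ≠ 0. Let (π^(𝐧))_{𝐧∈ℕ²} be a family of elements of R such that, for each 𝐧, the z^γ-coefficient of π^(𝐧) vanishes unless [γ] ≥ 0 and |γ| > |𝐧|. If Γ is a continuous ℝ-algebra endomorphism of R realizing (π^(𝐧))_{𝐧∈ℕ²}, then Γ(T̃*) ⊆ T̃* and Γ(T*) ⊆ T*. -/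
open MvPolynomial

namespace Stmt18Aux

open MvPowerSeries Finset

/-- series supported on multi-indices satisfying `P`. -/
def V (P : MIdx → Prop) : Submodule ℝ PS where
  carrier := {f | ∀ γ : MIdx, MvPowerSeries.coeff (R := ℝ) γ f ≠ 0 → P γ}
  zero_mem' := fun γ h => absurd (map_zero (MvPowerSeries.coeff (R := ℝ) γ)) h
  add_mem' := by
    intro f g hf hg γ h
    rw [map_add] at h
    by_cases h1 : MvPowerSeries.coeff (R := ℝ) γ f ≠ 0
    · exact hf γ h1
    · push_neg at h1
      exact hg γ (by simpa [h1] using h)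
  smul_mem' := by
    intro c f hf γ h
    refine hf γ fun h0 => h ?_
    rw [map_smul, h0, smul_zero]

lemma mem_V {P : MIdx → Prop} {f : PS} :
    f ∈ V P ↔ ∀ γ : MIdx, MvPowerSeries.coeff (R := ℝ) γ f ≠ 0 → P γ := Iff.rfl

lemma V_mono {P Q : MIdx → Prop} (h : ∀ γ, P γ → Q γ) : V P ≤ V Q :=
  fun _ hf => mem_V.2 fun γ hγ => h γ (mem_V.1 hf γ hγ)

lemma isClosed_V (P : MIdx → Prop) : IsClosed (V P : Set PS) := by
  have : (V P : Set PS) = ⋂ γ : MIdx, {f : PS | MvPowerSeries.coeff (R := ℝ) γ f ≠ 0 → P γ} := by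
    ext f; simp [mem_V, Set.mem_iInter]
  rw [this]
  refine isClosed_iInter fun γ => ?_
  by_cases hγ : P γ
  · simp only [hγ, implies_true]; exact isClosed_univ
  · have : {f : PS | MvPowerSeries.coeff (R := ℝ) γ f ≠ 0 → P γ} = {f : PS | f γ = 0} := by
      ext f
      simp only [Set.mem_setOf_eq, MvPowerSeries.coeff_apply]
      constructor
      · intro h; by_contra h0; exact hγ (h h0)
      · intro h h0; exact absurd h h0
    rw [this]
    have hc : Continuous fun f : PS => f γ := continuous_apply (A := fun _ : MIdx => ℝ) γ
    exact isClosed_eq hc continuous_const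

lemma mem_V_of_hasSum {P : MIdx → Prop} {ι : Type*} {f : ι → PS} {a : PS}
    (h : HasSum f a) (hf : ∀ i, f i ∈ V P) : a ∈ V P :=
  (isClosed_V P).mem_of_tendsto h
    (Filter.Eventually.of_forall fun s => sum_mem fun i _ => hf i)

/-! ### `brk` arithmetic -/

lemma brk_add (a b : MIdx) : brk (a + b) = brk a + brk b := by
  unfold brk
  rw [Finsupp.sum_add_index']
  · intro i; cases i <;> simp
  · intro i m n; cases i <;> push_cast <;> ring

lemma brk_zero : brk (0 : MIdx) = 0 := by simp [brk]

lemma brk_single (i : Idx) (n : ℕ) :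
    brk (Finsupp.single i n) =
      (match i with | Sum.inl k => (k : ℤ) * n | Sum.inr _ => -(n : ℤ)) := by
  unfold brk
  rw [Finsupp.sum_single_index]
  cases i <;> simp

/-- the graded piece: series supported on `brk ≥ c`. -/
def S (c : ℤ) : Submodule ℝ PS := V fun γ => c ≤ brk γ

lemma brk_single_inl (k n : ℕ) : brk (Finsupp.single (Sum.inl k) n) = (k : ℤ) * n :=
  brk_single _ _

lemma brk_single_inr (m : N2) (n : ℕ) : brk (Finsupp.single (Sum.inr m) n) = -(n : ℤ) :=
  brk_single _ _

lemma S_mono {a b : ℤ} (h : a ≤ b) : S b ≤ S a :=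
  V_mono fun γ hγ => le_trans h hγ

lemma one_mem_S : (1 : PS) ∈ S 0 := by
  classical
  rw [S, mem_V]
  intro γ h
  rw [MvPowerSeries.coeff_one] at h
  by_cases hγ : γ = 0
  · simp [hγ, brk_zero]
  · simp [hγ] at h

lemma mul_mem_S {a b : ℤ} {f g : PS} (hf : f ∈ S a) (hg : g ∈ S b) : f * g ∈ S (a + b) := by
  classical
  rw [S, mem_V] at hf hg ⊢
  intro γ h
  rw [MvPowerSeries.coeff_mul] at h
  obtain ⟨p, hp, hne⟩ := Finset.exists_ne_zero_of_sum_ne_zero h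
  replace hp : p.1 + p.2 = γ := by simpa using hp
  have h1 : MvPowerSeries.coeff (R := ℝ) p.1 f ≠ 0 := left_ne_zero_of_mul hne
  have h2 : MvPowerSeries.coeff (R := ℝ) p.2 g ≠ 0 := right_ne_zero_of_mul hne
  have := add_le_add (hf p.1 h1) (hg p.2 h2)
  rwa [← brk_add, hp] at this

lemma pow_mem_S {a : ℤ} {f : PS} (hf : f ∈ S a) (n : ℕ) : f ^ n ∈ S (n * a) := by
  induction n with
  | zero => simpa using one_mem_S
  | succ n ih =>
      have := mul_mem_S ih hf
      rw [pow_succ]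
      convert this using 2
      push_cast; ring

lemma monomial_one_mem_S (γ : MIdx) : (MvPowerSeries.monomial (R := ℝ) γ 1 : PS) ∈ S (brk γ) := by
  classical
  rw [S, mem_V]
  intro β h
  rw [MvPowerSeries.coeff_monomial] at h
  by_cases hβ : β = γ
  · simp [hβ]
  · simp [hβ] at h

lemma X_mem_S (i : Idx) :
    (MvPowerSeries.X i : PS) ∈ S (brk (Finsupp.single i 1)) := by
  rw [MvPowerSeries.X_def]
  exact monomial_one_mem_S _

/-! ### monomial expansion -/

lemma hasSum_monomials (f : PS) :
    HasSum (fun γ : MIdx => (MvPowerSeries.monomial (R := ℝ) γ (MvPowerSeries.coeff (R := ℝ) γ f) : PS)) f := by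
  classical
  refine Pi.hasSum.2 ?_
  intro β
  have : (fun γ : MIdx =>
      (MvPowerSeries.monomial (R := ℝ) γ (MvPowerSeries.coeff (R := ℝ) γ f) : PS) β) =
      fun γ : MIdx => if γ = β then f β else 0 := by
    funext γ
    have : (MvPowerSeries.monomial (R := ℝ) γ (MvPowerSeries.coeff (R := ℝ) γ f) : PS) β =
        MvPowerSeries.coeff (R := ℝ) β (MvPowerSeries.monomial (R := ℝ) γ (MvPowerSeries.coeff (R := ℝ) γ f)) := rfl
    rw [this, MvPowerSeries.coeff_monomial]
    by_cases h : β = γ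
    · subst h; simp [MvPowerSeries.coeff_apply]
    · simp [h, Ne.symm h]
  rw [this]
  exact hasSum_ite_eq β (f β)

lemma monomial_eq_smul (γ : MIdx) (c : ℝ) :
    (MvPowerSeries.monomial (R := ℝ) γ c : PS) = c • MvPowerSeries.monomial (R := ℝ) γ 1 := by
  rw [← map_smul, smul_eq_mul, mul_one]

end Stmt18Aux

namespace Stmt18Aux

lemma GammaX_inl {π : ℕ × ℕ → PS} {Γ : PS →ₐ[ℝ] PS}
    (hπ0 : π (0, 0) ∈ S 0) (hΓ : Realizes Γ π) (k : ℕ) :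
    Γ (MvPowerSeries.X (Sum.inl k)) ∈ S (k : ℤ) := by
  refine mem_V_of_hasSum (hΓ.2.2 k) fun l => ?_
  refine Submodule.smul_mem _ _ ?_
  have hx : (MvPowerSeries.X (Sum.inl (k + l)) : PS) ∈ S ((k + l : ℕ) : ℤ) := by
    have := X_mem_S (Sum.inl (k + l))
    rwa [brk_single_inl, Nat.cast_one, mul_one] at this
  have := mul_mem_S (pow_mem_S hπ0 l) hx
  rw [mul_zero, zero_add] at this
  exact S_mono (by exact_mod_cast Nat.le_add_right k l) this

lemma GammaX_inr {π : ℕ × ℕ → PS} {Γ : PS →ₐ[ℝ] PS}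
    (hπ : ∀ m : N2, π m.1 ∈ S 0) (hΓ : Realizes Γ π) (m : N2) :
    Γ (MvPowerSeries.X (Sum.inr m)) ∈ S (-1) := by
  rw [hΓ.2.1 m]
  refine add_mem ?_ (S_mono (by norm_num) (hπ m))
  have := X_mem_S (Sum.inr m)
  rwa [brk_single_inr, Nat.cast_one] at this

lemma GammaX (π : ℕ × ℕ → PS) (Γ : PS →ₐ[ℝ] PS)
    (hπ : ∀ n γ, MvPowerSeries.coeff (R := ℝ) γ (π n) ≠ 0 → 0 ≤ brk γ)
    (hΓ : Realizes Γ π) (i : Idx) :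
    Γ (MvPowerSeries.X i) ∈ S (brk (Finsupp.single i 1)) := by
  cases i with
  | inl k =>
      rw [brk_single_inl]
      simpa using GammaX_inl (fun γ h => hπ _ γ h) hΓ k
  | inr m =>
      rw [brk_single_inr]
      simpa using GammaX_inr (fun m γ h => hπ _ γ h) hΓ m

lemma Gamma_monomial (π : ℕ × ℕ → PS) (Γ : PS →ₐ[ℝ] PS)
    (hπ : ∀ n γ, MvPowerSeries.coeff (R := ℝ) γ (π n) ≠ 0 → 0 ≤ brk γ)
    (hΓ : Realizes Γ π) (γ : MIdx) :
    Γ (MvPowerSeries.monomial (R := ℝ) γ 1) ∈ S (brk γ) := by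
  induction γ using Finsupp.induction with
  | zero =>
      rw [MvPowerSeries.monomial_zero_one, map_one, brk_zero]
      exact one_mem_S
  | single_add i n γ hi hn ih =>
      have hmul : (MvPowerSeries.monomial (R := ℝ) (Finsupp.single i n + γ) 1 : PS) =
          MvPowerSeries.monomial (R := ℝ) (Finsupp.single i n) 1 * MvPowerSeries.monomial (R := ℝ) γ 1 := by
        rw [MvPowerSeries.monomial_mul_monomial, one_mul]
      have hXn : Γ (MvPowerSeries.monomial (R := ℝ) (Finsupp.single i n) 1) ∈
          S (brk (Finsupp.single i n)) := by
        rw [← MvPowerSeries.X_pow_eq, map_pow]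
        have := pow_mem_S (GammaX π Γ hπ hΓ i) n
        refine S_mono (le_of_eq ?_) this
        cases i with
        | inl k => rw [brk_single_inl, brk_single_inl]; push_cast; ring
        | inr m => rw [brk_single_inr, brk_single_inr]; push_cast; ring
      rw [hmul, map_mul, brk_add]
      exact mul_mem_S hXn ih

/-- the main membership lemma. -/
lemma Gamma_mem (π : ℕ × ℕ → PS) (Γ : PS →ₐ[ℝ] PS)
    (hπ : ∀ n γ, MvPowerSeries.coeff (R := ℝ) γ (π n) ≠ 0 → 0 ≤ brk γ)
    (hΓ : Realizes Γ π) {P : MIdx → Prop} (hP0 : ∀ γ, 0 ≤ brk γ → P γ) {f : PS}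
    (hf : ∀ γ, MvPowerSeries.coeff (R := ℝ) γ f ≠ 0 →
      0 ≤ brk γ ∨ ∃ m : N2, γ = Finsupp.single (Sum.inr m) 1 ∧
        P (Finsupp.single (Sum.inr m) 1)) :
    Γ f ∈ V P := by
  have hsum : HasSum
      (fun γ : MIdx => Γ (MvPowerSeries.monomial (R := ℝ) γ (MvPowerSeries.coeff (R := ℝ) γ f))) (Γ f) :=
    (hasSum_monomials f).map Γ.toLinearMap.toAddMonoidHom hΓ.1
  refine mem_V_of_hasSum hsum fun γ => ?_
  by_cases hc : MvPowerSeries.coeff (R := ℝ) γ f = 0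
  · rw [hc, map_zero, map_zero]; exact zero_mem _
  rw [monomial_eq_smul, map_smul]
  refine Submodule.smul_mem _ _ ?_
  rcases hf γ hc with h | ⟨m, rfl, hPm⟩
  · exact V_mono hP0 (S_mono h (Gamma_monomial π Γ hπ hΓ γ))
  · rw [← MvPowerSeries.X_def, hΓ.2.1 m]
    refine add_mem ?_ (V_mono hP0 (fun β hβ => hπ m.1 β hβ))
    intro β hβ
    classical
    rw [MvPowerSeries.X_def, MvPowerSeries.coeff_monomial] at hβ
    by_cases hβm : β = Finsupp.single (Sum.inr m) 1
    · subst hβm; exact hPm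
    · simp [hβm] at hβ

end Stmt18Aux

/-- **Realizing endomorphisms preserve the dual model space.** -/
theorem stmt18 (α w₁ w₂ : ℝ) (hα : 0 < α) (hw₁ : 0 < w₁) (hw₂ : 0 < w₂)
    (π : ℕ × ℕ → PS)
    (hπ : ∀ (n : ℕ × ℕ) (γ : MIdx), MvPowerSeries.coeff (R := ℝ) γ (π n) ≠ 0 →
        0 ≤ brk γ ∧ wt w₁ w₂ n < homdeg α w₁ w₂ γ)
    (Γ : PS →ₐ[ℝ] PS) (hΓ : Realizes Γ π) :
    Set.MapsTo Γ Ttilde Ttilde ∧ Set.MapsTo Γ Tstar Tstar := by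
  have hπ' : ∀ n γ, MvPowerSeries.coeff (R := ℝ) γ (π n) ≠ 0 → 0 ≤ brk γ :=
    fun n γ h => (hπ n γ h).1
  constructor
  · intro f hf
    exact Stmt18Aux.Gamma_mem π Γ hπ' hΓ (P := fun γ => 0 ≤ brk γ) (fun _ h => h)
      (fun γ h => Or.inl (hf γ h))
  · intro f hf
    exact Stmt18Aux.Gamma_mem π Γ hπ' hΓ
      (P := fun γ => 0 ≤ brk γ ∨ ∃ m : N2, γ = Finsupp.single (Sum.inr m) 1)
      (fun _ h => Or.inl h)
      (fun γ h => (hf γ h).imp id fun ⟨m, hm⟩ => ⟨m, hm, Or.inr ⟨m, rfl⟩⟩)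
end
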